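/- arXiv:0908.1586 — 5 statements merged into one kernel-verified Lean document; each statement's English description precedes it below -/
import Mathlib

section
/- Let V ⊆ ℝ_max^n be a max-plus cone with full support, and let {H_r}_{r∈ℕ} be a decreasing sequence (H_{r+1} ⊆ H_r) of half-spaces such that V ⊆ H_r for all r ∈ ℕ. Then there exists a half-space H such that H = ∩_{r∈ℕ} H_r. -/
noncomputable section

/-- The max-plus (tropical) semiring `ℝ ∪ {-∞}`:
addition is `max`, multiplication is `+` (with `-∞` absorbing). -/
abbrev Rmax : Type := WithBot ℝ

/-- A max-plus (tropical) cone: a set stable under max-plus linear combinations. -/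
def IsTropCone {ι : Type} (V : Set (ι → Rmax)) : Prop :=
  ∀ u ∈ V, ∀ w ∈ V, ∀ lam mu : Rmax, (fun i => max (lam + u i) (mu + w i)) ∈ V

/-- `tropCone X`: the set of all max-plus linear combinations of finitely many
elements of `X`. -/
def tropCone {ι : Type} (X : Set (ι → Rmax)) : Set (ι → Rmax) :=
  {x | ∃ (m : ℕ) (lam : Fin m → Rmax) (w : Fin m → ι → Rmax),
        (∀ s, w s ∈ X) ∧ x = fun i => Finset.univ.sup (fun s => lam s + w s i)}

/-- `tropCo X`: max-plus convex combinations (coefficients with maximum `0 = 𝟙`)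
of finitely many elements of `X`. -/
def tropCo {ι : Type} (X : Set (ι → Rmax)) : Set (ι → Rmax) :=
  {x | ∃ (m : ℕ) (lam : Fin m → Rmax) (w : Fin m → ι → Rmax),
        (∀ s, w s ∈ X) ∧ Finset.univ.sup lam = (0 : Rmax) ∧
        x = fun i => Finset.univ.sup (fun s => lam s + w s i)}

/-- Max-plus Minkowski sum of two subsets. -/
def tropSum {ι : Type} (A B : Set (ι → Rmax)) : Set (ι → Rmax) :=
  {z | ∃ a ∈ A, ∃ b ∈ B, z = fun i => max (a i) (b i)}

/-- A half-space of `ℝ_max^ι`. -/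
def IsHalfSpace {ι : Type} [Fintype ι] (H : Set (ι → Rmax)) : Prop :=
  ∃ a b : ι → Rmax,
    H = {x | Finset.univ.sup (fun i => a i + x i) ≤ Finset.univ.sup (fun j => b j + x j)}

/-- An affine half-space of `ℝ_max^ι`. -/
def IsAffineHalfSpace {ι : Type} [Fintype ι] (H : Set (ι → Rmax)) : Prop :=
  ∃ (a b : ι → Rmax) (c d : Rmax),
    H = {x | max (Finset.univ.sup (fun i => a i + x i)) c ≤
             max (Finset.univ.sup (fun j => b j + x j)) d}

/-- A max-plus polyhedron: an intersection of finitely many affine half-spaces. -/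
def IsPolyhedron {ι : Type} [Fintype ι] (C : Set (ι → Rmax)) : Prop :=
  ∃ (m : ℕ) (H : Fin m → Set (ι → Rmax)),
    (∀ k, IsAffineHalfSpace (H k)) ∧ C = ⋂ k, H k

/-- The recession cone of a max-plus convex set. -/
def recessionCone {ι : Type} (C : Set (ι → Rmax)) : Set (ι → Rmax) :=
  {u | ∃ x ∈ C, ∀ lam : Rmax, (fun i => max (x i) (lam + u i)) ∈ C}

/-- A half-space minimal (for inclusion) among the half-spaces containing `V`. -/
def IsMinimalHalfSpace {ι : Type} [Fintype ι] (V H : Set (ι → Rmax)) : Prop :=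
  IsHalfSpace H ∧ V ⊆ H ∧ ¬ ∃ H', IsHalfSpace H' ∧ V ⊆ H' ∧ H' ⊂ H

/-- The half-space written in normal form: `max_{i ∈ I} (a i + x i) ≤ max_{j ∈ J} (a j + x j)`
(the sup over an empty index set being `⊥ = -∞`). -/
def halfSpace {ι : Type} (I J : Finset ι) (a : ι → ℝ) : Set (ι → Rmax) :=
  {x | I.sup (fun i => ((a i : Rmax)) + x i) ≤ J.sup (fun j => ((a j : Rmax)) + x j)}

/-- The max-plus cone generated by the vectors `v 0, …, v (p-1)` (finite entries). -/
def genCone {ι : Type} [Fintype ι] {p : ℕ} (v : Fin p → ι → ℝ) : Set (ι → Rmax) :=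
  {x | ∃ lam : Fin p → Rmax, x = fun i => Finset.univ.sup (fun r => lam r + ((v r i : Rmax)))}

/-- `S_j(x)`: the `j`-th component of the type of `x` relative to the generators `v`. -/
def typeSet {ι : Type} {p : ℕ} (v : Fin p → ι → ℝ) (x : ι → ℝ) (j : ι) : Set (Fin p) :=
  {r | v r j - x j = ⨆ k, (v r k - x k)}

/-- `V` has full support. -/
def HasFullSupport {ι : Type} (V : Set (ι → Rmax)) : Prop :=
  ∀ k : ι, ∃ v ∈ V, v k ≠ ⊥

/-- `x` is a vertex of the natural cell decomposition induced by the generators `v`: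
the cell of `type(x)` consists exactly of the (finite) scalar multiples of `x`. -/
def IsVertex {ι : Type} {p : ℕ} (v : Fin p → ι → ℝ) (x : ι → ℝ) : Prop :=
  {y : ι → ℝ | ∀ j, typeSet v x j ⊆ typeSet v y j} = {y | ∃ c : ℝ, y = fun i => c + x i}

/-- The `i`-th max-plus unit vector. -/
def unitVec {ι : Type} [DecidableEq ι] (i : ι) : ι → Rmax :=
  fun k => if k = i then (0 : Rmax) else ⊥

/-- The vector `⊕_{j ∈ J} b j ⊙ e^j`. -/
def jVec {ι : Type} [DecidableEq ι] (J : Finset ι) (b : ι → ℝ) : ι → Rmax :=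
  fun k => if k ∈ J then ((b k : Rmax)) else ⊥

/-- The polar of a max-plus cone: the set of (pairs defining) half-spaces containing it. -/
def polar {ι : Type} [Fintype ι] (V : Set (ι → Rmax)) : Set ((ι → Rmax) × (ι → Rmax)) :=
  {q | ∀ x ∈ V, Finset.univ.sup (fun i => q.1 i + x i) ≤ Finset.univ.sup (fun j => q.2 j + x j)}

/-- Extreme vector of a max-plus cone of pairs (e.g. the polar). -/
def IsExtremePair {ι : Type} (W : Set ((ι → Rmax) × (ι → Rmax)))
    (z : (ι → Rmax) × (ι → Rmax)) : Prop :=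
  z ∈ W ∧ z ≠ (fun _ => (⊥ : Rmax), fun _ => (⊥ : Rmax)) ∧
    ∀ u ∈ W, ∀ w ∈ W,
      z = (fun i => max (u.1 i) (w.1 i), fun i => max (u.2 i) (w.2 i)) → z = u ∨ z = w

/-- Extreme point of a max-plus convex set. -/
def IsExtremePoint {ι : Type} (C : Set (ι → Rmax)) (z : ι → Rmax) : Prop :=
  z ∈ C ∧ ∀ u ∈ C, ∀ w ∈ C, ∀ lam mu : Rmax, max lam mu = (0 : Rmax) →
    z = (fun i => max (lam + u i) (mu + w i)) → z = u ∨ z = w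

/-- Extreme vector of a max-plus cone. -/
def IsExtremeVector {ι : Type} (W : Set (ι → Rmax)) (z : ι → Rmax) : Prop :=
  z ∈ W ∧ z ≠ (fun _ => (⊥ : Rmax)) ∧
    ∀ u ∈ W, ∀ w ∈ W, z = (fun i => max (u i) (w i)) → z = u ∨ z = w

/-- Projection of a subset of `ℝ_max^ι` onto the coordinates indexed by `K`. -/
def projCone {ι : Type} (K : Finset ι) (V : Set (ι → Rmax)) :
    Set ({k : ι // k ∈ K} → Rmax) :=
  {y | ∃ x ∈ V, y = fun k => x k.1}




section helpers
variable {n : ℕ}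

/-- the half-space defined by a pair of vectors -/
def tropHS (a b : Fin n → Rmax) : Set (Fin n → Rmax) :=
  {x | Finset.univ.sup (fun i => a i + x i) ≤ Finset.univ.sup (fun j => b j + x j)}

lemma trop_sup_add_coe (s : Finset (Fin n)) (f : Fin n → Rmax) (r : ℝ) :
    s.sup (fun i => f i + (r : Rmax)) = s.sup f + (r : Rmax) := by
  have := Finset.comp_sup_eq_sup_comp (s := s) (f := f) (fun x : Rmax => x + (r : Rmax))
    (fun x y => (max_add_add_right x y _).symm) (WithBot.bot_add _)
  exact this.symm

lemma trop_add_coe_le_coe_iff (a : Rmax) (r t : ℝ) :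
    a + (r : Rmax) ≤ (t : Rmax) ↔ a ≤ ((t - r : ℝ) : Rmax) := by
  induction a using WithBot.recBotCoe with
  | bot => simp [WithBot.bot_add]
  | coe α =>
      rw [← WithBot.coe_add, WithBot.coe_le_coe, WithBot.coe_le_coe]
      constructor <;> intro <;> linarith

lemma trop_coe_le_add_coe_iff (a : Rmax) (r t : ℝ) :
    (t : Rmax) ≤ a + (r : Rmax) ↔ ((t - r : ℝ) : Rmax) ≤ a := by
  induction a using WithBot.recBotCoe with
  | bot => simp [WithBot.bot_add]
  | coe α =>
      rw [← WithBot.coe_add, WithBot.coe_le_coe, WithBot.coe_le_coe]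
      constructor <;> intro <;> linarith

lemma trop_add_coe_le_add_coe_iff (a b : Rmax) (r : ℝ) :
    a + (r : Rmax) ≤ b + (r : Rmax) ↔ a ≤ b := by
  induction a using WithBot.recBotCoe with
  | bot => simp [WithBot.bot_add]
  | coe α =>
      induction b using WithBot.recBotCoe with
      | bot => simp [WithBot.bot_add, ← WithBot.coe_add]
      | coe β =>
          rw [← WithBot.coe_add, ← WithBot.coe_add, WithBot.coe_le_coe, WithBot.coe_le_coe]
          constructor <;> intro <;> linarith

lemma trop_add_lt_add_coe (a b : Rmax) (r : ℝ) (h : a < b) :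
    a + (r : Rmax) < b + (r : Rmax) := by
  refine lt_of_le_of_ne ((trop_add_coe_le_add_coe_iff a b r).mpr h.le) (fun heq => ?_)
  have h1 : b ≤ a := (trop_add_coe_le_add_coe_iff b a r).mp heq.ge
  exact absurd h (not_lt.mpr h1)

lemma trop_sup_add_max (f g : Fin n → Rmax) (h : Fin n → Rmax) :
    Finset.univ.sup (fun k => f k + max (g k) (h k)) =
      max (Finset.univ.sup fun k => f k + g k) (Finset.univ.sup fun k => f k + h k) := by
  have : (fun k => f k + max (g k) (h k))
      = (fun k => f k + g k) ⊔ (fun k => f k + h k) := by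
    funext k
    exact (max_add_add_left (f k) (g k) (h k)).symm
  rw [this]
  exact Finset.sup_sup ..

lemma trop_sup_add_unit (f : Fin n → Rmax) (i : Fin n) (t : ℝ) :
    Finset.univ.sup (fun k => f k + (if k = i then (t : Rmax) else ⊥)) = f i + (t : Rmax) := by
  apply le_antisymm
  · apply Finset.sup_le
    intro k _
    by_cases hk : k = i
    · subst hk; simp
    · simp [hk, WithBot.add_bot]
  · have := Finset.le_sup (f := fun k => f k + (if k = i then (t : Rmax) else ⊥))
      (Finset.mem_univ i)
    simpa using this

end helpers

section canonical
variable {n : ℕ}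

lemma trop_exists_canonical_rep (hn : 0 < n) (v : Fin n → ℝ) (S : Set (Fin n → Rmax))
    (hS : ∃ a b : Fin n → Rmax,
      S = {x | Finset.univ.sup (fun i => a i + x i) ≤ Finset.univ.sup (fun j => b j + x j)})
    (hv : (fun i => ((v i : ℝ) : Rmax)) ∈ S) (hne : S ≠ Set.univ) :
    ∃ a b : Fin n → Rmax, S = tropHS a b ∧ (∀ i, a i ≠ ⊥ → b i = ⊥) ∧
      Finset.univ.sup (fun j => b j + ((v j : ℝ) : Rmax)) = 0 ∧
      (∀ i, a i + ((v i : ℝ) : Rmax) ≤ (0 : Rmax)) := by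
  have hnemp : Nonempty (Fin n) := Fin.pos_iff_nonempty.mp hn
  set vb : Fin n → Rmax := fun i => ((v i : ℝ) : Rmax) with hvb
  obtain ⟨a0, b0, hab⟩ := hS
  have hv0 : Finset.univ.sup (fun i => a0 i + vb i) ≤ Finset.univ.sup (fun j => b0 j + vb j) := by
    rw [hab] at hv; exact hv
  set c := Finset.univ.sup (fun j => b0 j + vb j) with hc
  have hcne : c ≠ ⊥ := by
    intro hbot
    apply hne
    have ha : ∀ i, a0 i = ⊥ := by
      intro i
      have h1 : a0 i + vb i ≤ ⊥ := by
        have h2 := Finset.le_sup (f := fun i => a0 i + vb i) (Finset.mem_univ i)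
        rw [hbot] at hv0
        exact le_trans h2 hv0
      rcases WithBot.add_eq_bot.mp (le_bot_iff.mp h1) with h | h
      · exact h
      · exact absurd h (WithBot.coe_ne_bot)
    rw [hab]
    apply Set.eq_univ_of_forall
    intro x
    show Finset.univ.sup (fun i => a0 i + x i) ≤ _
    have : Finset.univ.sup (fun i => a0 i + x i) ≤ ⊥ := by
      apply Finset.sup_le
      intro i _
      rw [ha i, WithBot.bot_add]
    exact le_trans this bot_le
  obtain ⟨γ, hγ⟩ : ∃ γ : ℝ, c = (γ : Rmax) := ⟨c.unbot hcne, (WithBot.coe_unbot c hcne).symm⟩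
  set a1 : Fin n → Rmax := fun i => a0 i + ((-γ : ℝ) : Rmax) with ha1
  set b1 : Fin n → Rmax := fun i => b0 i + ((-γ : ℝ) : Rmax) with hb1
  have hsup1 : ∀ x : Fin n → Rmax,
      Finset.univ.sup (fun i => a1 i + x i) = Finset.univ.sup (fun i => a0 i + x i) + ((-γ:ℝ):Rmax) := by
    intro x
    rw [← trop_sup_add_coe]
    congr 1
    funext i
    rw [ha1]
    exact add_right_comm _ _ _
  have hsup1b : ∀ x : Fin n → Rmax,
      Finset.univ.sup (fun i => b1 i + x i) = Finset.univ.sup (fun i => b0 i + x i) + ((-γ:ℝ):Rmax) := by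
    intro x
    rw [← trop_sup_add_coe]
    congr 1
    funext i
    rw [hb1]
    exact add_right_comm _ _ _
  have h1 : S = tropHS a1 b1 := by
    rw [hab]
    ext x
    show _ ↔ Finset.univ.sup (fun i => a1 i + x i) ≤ Finset.univ.sup (fun j => b1 j + x j)
    rw [hsup1, hsup1b]
    exact (trop_add_coe_le_add_coe_iff _ _ _).symm
  have h1norm : Finset.univ.sup (fun j => b1 j + vb j) = 0 := by
    rw [hsup1b, ← hc, hγ, ← WithBot.coe_add]
    norm_num
  have h1v : Finset.univ.sup (fun i => a1 i + vb i) ≤ 0 := by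
    have := h1 ▸ hv
    have hx : Finset.univ.sup (fun i => a1 i + vb i) ≤ Finset.univ.sup (fun j => b1 j + vb j) := this
    rw [h1norm] at hx; exact hx
  classical
  set A : Fin n → Rmax := fun i => if b1 i < a1 i then a1 i else ⊥ with hA
  set B : Fin n → Rmax := fun i => if b1 i < a1 i then ⊥ else b1 i with hB
  have hD : ∀ i, A i ≠ ⊥ → B i = ⊥ := by
    intro i h
    rw [hA] at h; rw [hB]
    by_cases hcond : b1 i < a1 i
    · simp [hcond]
    · simp [hcond] at h
  have hAle : ∀ i, A i ≤ a1 i := by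
    intro i
    by_cases h : b1 i < a1 i <;> simp [hA, h]
  have hBle : ∀ i, B i ≤ b1 i := by
    intro i
    by_cases h : b1 i < a1 i <;> simp [hB, h]
  -- strict pointwise comparison helper
  have hstrict : ∀ (i : Fin n) (x : Fin n → Rmax), b1 i < a1 i → x i ≠ ⊥ →
      b1 i + x i < a1 i + x i := by
    intro i x hlt hx
    obtain ⟨ξ, hξ⟩ : ∃ ξ : ℝ, x i = (ξ : Rmax) := ⟨(x i).unbot hx, (WithBot.coe_unbot _ hx).symm⟩
    rw [hξ]
    exact trop_add_lt_add_coe _ _ _ hlt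
  have hset : tropHS a1 b1 = tropHS A B := by
    ext x
    show Finset.univ.sup (fun i => a1 i + x i) ≤ Finset.univ.sup (fun j => b1 j + x j)
      ↔ Finset.univ.sup (fun i => A i + x i) ≤ Finset.univ.sup (fun j => B j + x j)
    constructor
    · intro hx
      by_contra hcon
      push_neg at hcon
      have h2 : Finset.univ.sup (fun i => A i + x i) ≤ Finset.univ.sup (fun i => a1 i + x i) :=
        Finset.sup_mono_fun (fun i _ => add_le_add_left (hAle i) _)
      have hb1ne : Finset.univ.sup (fun j => b1 j + x j) ≠ ⊥ := by
        intro hbot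
        have : Finset.univ.sup (fun i => A i + x i) ≤ ⊥ := le_trans (le_trans h2 hx) hbot.le
        exact absurd (le_bot_iff.mp this ▸ hcon) (by simp)
      obtain ⟨j, _, hj⟩ := Finset.exists_mem_eq_sup Finset.univ Finset.univ_nonempty
        (fun j => b1 j + x j)
      by_cases hj2 : b1 j < a1 j
      · have hxj : x j ≠ ⊥ := by
          intro hb; rw [hb, WithBot.add_bot] at hj; exact hb1ne hj
        have hlt := hstrict j x hj2 hxj
        have hchain : a1 j + x j ≤ b1 j + x j := by
          calc a1 j + x j ≤ Finset.univ.sup (fun i => a1 i + x i) :=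
              Finset.le_sup (f := fun i => a1 i + x i) (Finset.mem_univ j)
          _ ≤ Finset.univ.sup (fun j => b1 j + x j) := hx
          _ = b1 j + x j := hj
        exact absurd hchain (not_le.mpr hlt)
      · have hBj : B j = b1 j := by rw [hB]; simp [hj2]
        have : Finset.univ.sup (fun j => b1 j + x j) ≤ Finset.univ.sup (fun j => B j + x j) := by
          rw [hj]
          rw [← hBj]
          exact Finset.le_sup (f := fun j => B j + x j) (Finset.mem_univ j)
        exact absurd (le_trans h2 (le_trans hx this)) (not_le.mpr hcon)
    · intro hx
      apply Finset.sup_le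
      intro i _
      by_cases hi : b1 i < a1 i
      · have hAi : A i = a1 i := by rw [hA]; simp [hi]
        calc a1 i + x i = A i + x i := by rw [hAi]
        _ ≤ Finset.univ.sup (fun i => A i + x i) :=
            Finset.le_sup (f := fun i => A i + x i) (Finset.mem_univ i)
        _ ≤ Finset.univ.sup (fun j => B j + x j) := hx
        _ ≤ Finset.univ.sup (fun j => b1 j + x j) :=
            Finset.sup_mono_fun (fun j _ => add_le_add_left (hBle j) _)
      · push_neg at hi
        calc a1 i + x i ≤ b1 i + x i := add_le_add_left hi _
        _ ≤ Finset.univ.sup (fun j => b1 j + x j) :=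
            Finset.le_sup (f := fun j => b1 j + x j) (Finset.mem_univ i)
  have hnorm2 : Finset.univ.sup (fun j => B j + vb j) = 0 := by
    apply le_antisymm
    · calc Finset.univ.sup (fun j => B j + vb j)
          ≤ Finset.univ.sup (fun j => b1 j + vb j) :=
            Finset.sup_mono_fun (fun j _ => add_le_add_left (hBle j) _)
      _ = 0 := h1norm
    · obtain ⟨j, _, hj⟩ := Finset.exists_mem_eq_sup Finset.univ Finset.univ_nonempty
        (fun j => b1 j + vb j)
      rw [h1norm] at hj
      by_cases hj2 : b1 j < a1 j
      · exfalso
        have hlt := hstrict j vb hj2 (WithBot.coe_ne_bot)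
        rw [← hj] at hlt
        have : a1 j + vb j ≤ 0 :=
          le_trans (Finset.le_sup (f := fun i => a1 i + vb i) (Finset.mem_univ j)) h1v
        exact absurd this (not_le.mpr hlt)
      · have hBj : B j = b1 j := by rw [hB]; simp [hj2]
        rw [hj, ← hBj]
        exact Finset.le_sup (f := fun j => B j + vb j) (Finset.mem_univ j)
  have hAB : S = tropHS A B := h1.trans hset
  have hA0 : ∀ i, A i + vb i ≤ (0 : Rmax) := by
    intro i
    have hvAB : vb ∈ tropHS A B := hAB ▸ hv
    have : Finset.univ.sup (fun i => A i + vb i) ≤ Finset.univ.sup (fun j => B j + vb j) := hvAB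
    rw [hnorm2] at this
    exact le_trans (Finset.le_sup (f := fun i => A i + vb i) (Finset.mem_univ i)) this
  exact ⟨A, B, hAB, hD, hnorm2, hA0⟩

end canonical

section mainlemma
variable {n : ℕ}

lemma trop_sup_add_two (f : Fin n → Rmax) {i j : Fin n} (hij : i ≠ j) (s t : ℝ) :
    Finset.univ.sup (fun k => f k + (if k = i then (s:Rmax) else if k = j then (t:Rmax) else ⊥))
      = max (f i + (s:Rmax)) (f j + (t:Rmax)) := by
  apply le_antisymm
  · apply Finset.sup_le
    intro k _
    by_cases h1 : k = i
    · subst h1; simp only [if_pos rfl]; exact le_max_left _ _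
    · by_cases h2 : k = j
      · subst h2; rw [if_neg h1, if_pos rfl]; exact le_max_right _ _
      · rw [if_neg h1, if_neg h2, WithBot.add_bot]; exact bot_le
  · apply max_le
    · have := Finset.le_sup
        (f := fun k => f k + (if k = i then (s:Rmax) else if k = j then (t:Rmax) else ⊥))
        (Finset.mem_univ i)
      simpa using this
    · have := Finset.le_sup
        (f := fun k => f k + (if k = i then (s:Rmax) else if k = j then (t:Rmax) else ⊥))
        (Finset.mem_univ j)
      simpa [if_neg (Ne.symm hij)] using this

lemma trop_main (hn : 0 < n) (v : Fin n → ℝ) (H : ℕ → Set (Fin n → Rmax))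
    (hHS : ∀ r, ∃ a b : Fin n → Rmax,
      H r = {x | Finset.univ.sup (fun i => a i + x i) ≤ Finset.univ.sup (fun j => b j + x j)})
    (hchain : ∀ r s, r ≤ s → H s ⊆ H r)
    (hv : ∀ r, (fun i => ((v i : ℝ) : Rmax)) ∈ H r)
    (hne : ∀ r, H r ≠ Set.univ) :
    ∃ H' : Set (Fin n → Rmax), (∃ a b : Fin n → Rmax,
      H' = {x | Finset.univ.sup (fun i => a i + x i) ≤ Finset.univ.sup (fun j => b j + x j)})
      ∧ H' = ⋂ r, H r := by
  classical
  have hnemp : Nonempty (Fin n) := Fin.pos_iff_nonempty.mp hn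
  choose Aa Bb hrep hD hN hA0 using fun m =>
    trop_exists_canonical_rep hn v (H m) (hHS m) (hv m) (hne m)
  have hmem : ∀ m (x : Fin n → Rmax), x ∈ H m ↔
      Finset.univ.sup (fun i => Aa m i + x i) ≤ Finset.univ.sup (fun j => Bb m j + x j) := by
    intro m x
    rw [hrep m]
    exact Iff.rfl
  have hex : ∀ m, ∃ i, Aa m i ≠ ⊥ := by
    intro m
    by_contra hc
    push_neg at hc
    apply hne m
    rw [hrep m]
    apply Set.eq_univ_of_forall
    intro x
    show Finset.univ.sup (fun i => Aa m i + x i) ≤ _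
    have hb : Finset.univ.sup (fun i => Aa m i + x i) ≤ ⊥ := by
      apply Finset.sup_le
      intro i _
      rw [hc i, WithBot.bot_add]
    exact le_trans hb bot_le
  -- Lemma A : left coefficients are nondecreasing
  have lemA : ∀ m M, m ≤ M → ∀ i, Aa m i ≤ Aa M i := by
    intro m M hmM i
    by_cases hbm : Aa m i = ⊥
    · rw [hbm]; exact bot_le
    by_contra hcon
    push_neg at hcon
    obtain ⟨am, ham⟩ : ∃ r : ℝ, Aa m i = (r : Rmax) :=
      ⟨_, (WithBot.coe_unbot _ hbm).symm⟩
    obtain ⟨t, ht1, ht2⟩ : ∃ t : ℝ, Aa M i ≤ ((-t : ℝ) : Rmax) ∧ (-t : ℝ) < am := by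
      by_cases hbM : Aa M i = ⊥
      · exact ⟨1 - am, by rw [hbM]; exact bot_le, by norm_num⟩
      · obtain ⟨aM, haM⟩ : ∃ r : ℝ, Aa M i = (r : Rmax) :=
          ⟨_, (WithBot.coe_unbot _ hbM).symm⟩
        have hlt : aM < am := by
          rw [ham, haM] at hcon; exact_mod_cast hcon
        refine ⟨-((aM + am)/2), ?_, by linarith⟩
        rw [haM, WithBot.coe_le_coe]
        linarith
    set u : Fin n → Rmax :=
      fun k => max ((v k : ℝ) : Rmax) (if k = i then (t : Rmax) else ⊥) with hu
    have hsupu : ∀ f : Fin n → Rmax, Finset.univ.sup (fun k => f k + u k)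
        = max (Finset.univ.sup fun k => f k + ((v k : ℝ) : Rmax)) (f i + (t : Rmax)) := by
      intro f
      rw [hu]
      rw [trop_sup_add_max f _ _, trop_sup_add_unit]
    have huM : u ∈ H M := by
      refine (hmem M u).mpr ?_
      rw [hsupu (Aa M), hsupu (Bb M)]
      have h1 : Finset.univ.sup (fun k => Aa M k + ((v k : ℝ) : Rmax)) ≤ 0 :=
        Finset.sup_le fun k _ => hA0 M k
      have h2 : Aa M i + (t : Rmax) ≤ 0 := by
        calc Aa M i + (t : Rmax) ≤ ((-t : ℝ) : Rmax) + (t : Rmax) := add_le_add_left ht1 _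
        _ = ((0 : ℝ) : Rmax) := by rw [← WithBot.coe_add]; norm_num
        _ = 0 := WithBot.coe_zero
      calc max (Finset.univ.sup fun k => Aa M k + ((v k : ℝ) : Rmax)) (Aa M i + (t : Rmax))
          ≤ 0 := max_le h1 h2
      _ = Finset.univ.sup (fun k => Bb M k + ((v k : ℝ) : Rmax)) := (hN M).symm
      _ ≤ _ := le_max_left _ _
    have h3 := (hmem m u).mp (hchain m M hmM huM)
    rw [hsupu (Aa m), hsupu (Bb m)] at h3
    have hBmi : Bb m i = ⊥ := hD m i (by rw [ham]; exact WithBot.coe_ne_bot)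
    rw [hBmi, WithBot.bot_add, max_eq_left bot_le, hN m] at h3
    have h4 : Aa m i + (t : Rmax) ≤ 0 := le_trans (le_max_right _ _) h3
    rw [ham, ← WithBot.coe_add, ← WithBot.coe_zero, WithBot.coe_le_coe] at h4
    linarith
  -- diamond lemma
  have lemDiamond : ∀ m M, m ≤ M → ∀ i j (am aM bM : ℝ), Aa m i = (am : Rmax) →
      Aa M i = (aM : Rmax) → Bb M j = (bM : Rmax) →
      ((am + bM - aM : ℝ) : Rmax) ≤ Bb m j := by
    intro m M hmM i j am aM bM ham haM hbM
    have hij : i ≠ j := by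
      intro h; subst h
      have hb := hD M i (by rw [haM]; exact WithBot.coe_ne_bot)
      rw [hb] at hbM
      exact absurd hbM.symm WithBot.coe_ne_bot
    have hAMj : Aa M j = ⊥ := by
      by_contra h
      rw [hD M j h] at hbM
      exact absurd hbM.symm WithBot.coe_ne_bot
    have hAmj : Aa m j = ⊥ := le_bot_iff.mp (hAMj ▸ lemA m M hmM j)
    have hBMi : Bb M i = ⊥ := hD M i (by rw [haM]; exact WithBot.coe_ne_bot)
    have hBmi : Bb m i = ⊥ := hD m i (by rw [ham]; exact WithBot.coe_ne_bot)
    set s : ℝ := bM - aM with hs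
    set u : Fin n → Rmax :=
      fun k => if k = i then (s : Rmax) else if k = j then ((0:ℝ) : Rmax) else ⊥ with hu
    have huM : u ∈ H M := by
      refine (hmem M u).mpr ?_
      rw [hu, trop_sup_add_two (Aa M) hij s 0, trop_sup_add_two (Bb M) hij s 0]
      rw [hAMj, WithBot.bot_add, hBMi, WithBot.bot_add, max_eq_left bot_le, max_eq_right bot_le]
      rw [haM, hbM, ← WithBot.coe_add, ← WithBot.coe_add, WithBot.coe_le_coe, hs]
      linarith
    have h3 := (hmem m u).mp (hchain m M hmM huM)
    rw [hu, trop_sup_add_two (Aa m) hij s 0, trop_sup_add_two (Bb m) hij s 0] at h3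
    rw [hAmj, WithBot.bot_add, hBmi, WithBot.bot_add, max_eq_left bot_le, max_eq_right bot_le] at h3
    rw [ham, ← WithBot.coe_add] at h3
    rw [WithBot.coe_zero, add_zero] at h3
    have heq : (am + s : ℝ) = am + bM - aM := by rw [hs]; ring
    rw [heq] at h3
    exact h3
  have hBbot : ∀ m j, Bb (m+1) j ≠ ⊥ → Bb m j ≠ ⊥ := by
    intro m j h
    obtain ⟨i, hi⟩ := hex m
    obtain ⟨am, ham⟩ : ∃ r : ℝ, Aa m i = (r : Rmax) := ⟨_, (WithBot.coe_unbot _ hi).symm⟩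
    have hle := lemA m (m+1) (Nat.le_succ m) i
    have hne2 : Aa (m+1) i ≠ ⊥ := by
      intro hb; rw [hb] at hle; exact hi (le_bot_iff.mp hle)
    obtain ⟨aM, haM⟩ : ∃ r : ℝ, Aa (m+1) i = (r : Rmax) := ⟨_, (WithBot.coe_unbot _ hne2).symm⟩
    obtain ⟨bM, hbM⟩ : ∃ r : ℝ, Bb (m+1) j = (r : Rmax) := ⟨_, (WithBot.coe_unbot _ h).symm⟩
    have hd := lemDiamond m (m+1) (Nat.le_succ m) i j am aM bM ham haM hbM
    intro hb
    rw [hb] at hd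
    exact absurd (le_bot_iff.mp hd) WithBot.coe_ne_bot
  -- the increments
  set dif : ℕ → Fin n → Rmax := fun m j =>
    if Bb (m+1) j = ⊥ then ⊥ else ((WithBot.unbotD 0 (Bb (m+1) j) - WithBot.unbotD 0 (Bb m j) : ℝ) : Rmax)
    with hdif
  set Del : ℕ → ℝ := fun m => max (WithBot.unbotD 0 (Finset.univ.sup (dif m))) 0 with hDel
  have hDel0 : ∀ m, 0 ≤ Del m := fun m => le_max_right _ _
  have hDeli : ∀ m j (bm b' : ℝ), Bb m j = (bm : Rmax) → Bb (m+1) j = (b' : Rmax) →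
      b' ≤ bm + Del m := by
    intro m j bm b' hbm hb'
    have h1 : dif m j = ((b' - bm : ℝ) : Rmax) := by
      rw [hdif]
      simp only
      rw [if_neg (by rw [hb']; exact WithBot.coe_ne_bot), hbm, hb',
        WithBot.unbotD_coe, WithBot.unbotD_coe]
    have h2 : dif m j ≤ Finset.univ.sup (dif m) := Finset.le_sup (Finset.mem_univ j)
    rw [h1] at h2
    have h3 : Finset.univ.sup (dif m) ≠ ⊥ := by
      intro hb; rw [hb] at h2; exact absurd (le_bot_iff.mp h2) WithBot.coe_ne_bot
    obtain ⟨sg, hsg⟩ : ∃ r : ℝ, Finset.univ.sup (dif m) = (r : Rmax) :=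
      ⟨_, (WithBot.coe_unbot _ h3).symm⟩
    rw [hsg, WithBot.coe_le_coe] at h2
    have h4 : sg ≤ Del m := by
      rw [hDel]; simp only; rw [hsg, WithBot.unbotD_coe]; exact le_max_left _ _
    linarith
  have hDelii : ∀ m i (am a' : ℝ), Aa m i = (am : Rmax) → Aa (m+1) i = (a' : Rmax) →
      Del m ≤ a' - am := by
    intro m i am a' ham ha'
    have hbase : am ≤ a' := by
      have := lemA m (m+1) (Nat.le_succ m) i
      rw [ham, ha', WithBot.coe_le_coe] at this
      exact this
    rw [hDel]
    simp only
    apply max_le _ (by linarith)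
    by_cases hS : Finset.univ.sup (dif m) = ⊥
    · rw [hS, WithBot.unbotD_bot]; linarith
    obtain ⟨sg, hsg⟩ : ∃ r : ℝ, Finset.univ.sup (dif m) = (r : Rmax) :=
      ⟨_, (WithBot.coe_unbot _ hS).symm⟩
    rw [hsg, WithBot.unbotD_coe]
    obtain ⟨j, _, hj⟩ := Finset.exists_mem_eq_sup Finset.univ Finset.univ_nonempty (dif m)
    rw [hsg] at hj
    have hne3 : Bb (m+1) j ≠ ⊥ := by
      intro hb
      rw [hdif] at hj
      simp only at hj
      rw [if_pos hb] at hj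
      exact absurd hj WithBot.coe_ne_bot
    obtain ⟨b', hb'⟩ : ∃ r : ℝ, Bb (m+1) j = (r : Rmax) := ⟨_, (WithBot.coe_unbot _ hne3).symm⟩
    obtain ⟨bm, hbm⟩ : ∃ r : ℝ, Bb m j = (r : Rmax) :=
      ⟨_, (WithBot.coe_unbot _ (hBbot m j hne3)).symm⟩
    have hjval : sg = b' - bm := by
      rw [hdif] at hj
      simp only at hj
      rw [if_neg hne3, hb', hbm, WithBot.unbotD_coe, WithBot.unbotD_coe] at hj
      exact_mod_cast hj
    have hd := lemDiamond m (m+1) (Nat.le_succ m) i j am a' b' ham ha' hb'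
    rw [hbm, WithBot.coe_le_coe] at hd
    linarith
  -- the normalizing shifts
  set sft : ℕ → ℝ := fun m => ∑ k ∈ Finset.range m, Del k with hsft
  have hsfts : ∀ m, sft (m+1) = sft m + Del m := by
    intro m; rw [hsft]; exact Finset.sum_range_succ _ _
  have hsft0 : ∀ m, 0 ≤ sft m := by
    intro m; rw [hsft]; exact Finset.sum_nonneg fun k _ => hDel0 k
  set A' : ℕ → Fin n → Rmax := fun m i => Aa m i + ((-(sft m) : ℝ) : Rmax) with hA'
  set B' : ℕ → Fin n → Rmax := fun m j => Bb m j + ((-(sft m) : ℝ) : Rmax) with hB'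
  have hmem' : ∀ m (x : Fin n → Rmax), x ∈ H m ↔
      Finset.univ.sup (fun i => A' m i + x i) ≤ Finset.univ.sup (fun j => B' m j + x j) := by
    intro m x
    rw [hmem m x]
    have e1 : Finset.univ.sup (fun i => A' m i + x i)
        = Finset.univ.sup (fun i => Aa m i + x i) + ((-(sft m) : ℝ) : Rmax) := by
      rw [← trop_sup_add_coe]
      congr 1
      funext i
      rw [hA']
      exact add_right_comm _ _ _
    have e2 : Finset.univ.sup (fun j => B' m j + x j)
        = Finset.univ.sup (fun j => Bb m j + x j) + ((-(sft m) : ℝ) : Rmax) := by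
      rw [← trop_sup_add_coe]
      congr 1
      funext j
      rw [hB']
      exact add_right_comm _ _ _
    rw [e1, e2]
    exact (trop_add_coe_le_add_coe_iff _ _ _).symm
  have hA'mono : ∀ m i, A' m i ≤ A' (m+1) i := by
    intro m i
    by_cases hb : Aa m i = ⊥
    · show Aa m i + _ ≤ _
      rw [hb, WithBot.bot_add]; exact bot_le
    obtain ⟨am, ham⟩ : ∃ r : ℝ, Aa m i = (r : Rmax) := ⟨_, (WithBot.coe_unbot _ hb).symm⟩
    have hne2 : Aa (m+1) i ≠ ⊥ := by
      intro hbb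
      have := lemA m (m+1) (Nat.le_succ m) i
      rw [hbb] at this
      exact hb (le_bot_iff.mp this)
    obtain ⟨a', ha'⟩ : ∃ r : ℝ, Aa (m+1) i = (r : Rmax) := ⟨_, (WithBot.coe_unbot _ hne2).symm⟩
    show Aa m i + _ ≤ Aa (m+1) i + _
    rw [ham, ha', ← WithBot.coe_add, ← WithBot.coe_add, WithBot.coe_le_coe]
    have := hDelii m i am a' ham ha'
    have hss := hsfts m
    linarith
  have hB'anti : ∀ m j, B' (m+1) j ≤ B' m j := by
    intro m j
    by_cases hb : Bb (m+1) j = ⊥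
    · show Bb (m+1) j + _ ≤ _
      rw [hb, WithBot.bot_add]; exact bot_le
    obtain ⟨b', hb'⟩ : ∃ r : ℝ, Bb (m+1) j = (r : Rmax) := ⟨_, (WithBot.coe_unbot _ hb).symm⟩
    obtain ⟨bm, hbm⟩ : ∃ r : ℝ, Bb m j = (r : Rmax) :=
      ⟨_, (WithBot.coe_unbot _ (hBbot m j hb)).symm⟩
    show Bb (m+1) j + _ ≤ Bb m j + _
    rw [hb', hbm, ← WithBot.coe_add, ← WithBot.coe_add, WithBot.coe_le_coe]
    have := hDeli m j bm b' hbm hb'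
    have hss := hsfts m
    linarith
  have hA'chain : ∀ (i : Fin n) m M, m ≤ M → A' m i ≤ A' M i := by
    intro i m M h
    induction M, h using Nat.le_induction with
    | base => exact le_rfl
    | succ M hM ih => exact le_trans ih (hA'mono M i)
  have hB'chain : ∀ (j : Fin n) m M, m ≤ M → B' M j ≤ B' m j := by
    intro j m M h
    induction M, h using Nat.le_induction with
    | base => exact le_rfl
    | succ M hM ih => exact le_trans (hB'anti M j) ih
  have hA'bdd : ∀ m i, A' m i ≤ ((-(v i) : ℝ) : Rmax) := by
    intro m i
    have h1 : Aa m i ≤ ((-(v i) : ℝ) : Rmax) := by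
      have h0 := hA0 m i
      rw [← WithBot.coe_zero] at h0
      have := (trop_add_coe_le_coe_iff _ _ _).mp h0
      simpa using this
    calc A' m i = Aa m i + ((-(sft m) : ℝ) : Rmax) := rfl
    _ ≤ ((-(v i) : ℝ) : Rmax) + ((-(sft m) : ℝ) : Rmax) := add_le_add_left h1 _
    _ = ((-(v i) - sft m : ℝ) : Rmax) := by rw [← WithBot.coe_add, sub_eq_add_neg]
    _ ≤ ((-(v i) : ℝ) : Rmax) := by
        rw [WithBot.coe_le_coe]
        have := hsft0 m
        linarith
  set AA : Fin n → Rmax := fun i => ⨆ m, A' m i with hAAdef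
  set BB : Fin n → Rmax := fun j => ⨅ m, B' m j with hBBdef
  have hbddA : ∀ i, BddAbove (Set.range fun m => A' m i) := by
    intro i
    refine ⟨((-(v i) : ℝ) : Rmax), ?_⟩
    rintro _ ⟨m, rfl⟩
    exact hA'bdd m i
  have hAA : ∀ m i, A' m i ≤ AA i := fun m i => le_ciSup (hbddA i) m
  have hBB : ∀ m j, BB j ≤ B' m j := fun m j => ciInf_le (OrderBot.bddBelow _) m
  refine ⟨{x | Finset.univ.sup (fun i => AA i + x i) ≤ Finset.univ.sup (fun j => BB j + x j)},
    ⟨AA, BB, rfl⟩, ?_⟩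
  apply Set.Subset.antisymm
  · intro x hx
    apply Set.mem_iInter.mpr
    intro m
    refine (hmem' m x).mpr ?_
    have hxx : Finset.univ.sup (fun i => AA i + x i) ≤ Finset.univ.sup (fun j => BB j + x j) := hx
    calc Finset.univ.sup (fun i => A' m i + x i)
        ≤ Finset.univ.sup (fun i => AA i + x i) :=
          Finset.sup_mono_fun fun i _ => add_le_add_left (hAA m i) _
    _ ≤ Finset.univ.sup (fun j => BB j + x j) := hxx
    _ ≤ Finset.univ.sup (fun j => B' m j + x j) :=
          Finset.sup_mono_fun fun j _ => add_le_add_left (hBB m j) _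
  · intro x hx
    have hxm : ∀ m, x ∈ H m := Set.mem_iInter.mp hx
    show Finset.univ.sup (fun i => AA i + x i) ≤ Finset.univ.sup (fun j => BB j + x j)
    apply Finset.sup_le
    intro i _
    by_cases hxi : x i = ⊥
    · rw [hxi, WithBot.add_bot]; exact bot_le
    by_cases hAAi : AA i = ⊥
    · rw [hAAi, WithBot.bot_add]; exact bot_le
    obtain ⟨xi, hxi'⟩ : ∃ r : ℝ, x i = (r : Rmax) := ⟨_, (WithBot.coe_unbot _ hxi).symm⟩
    have hex0 : ∃ m0, A' m0 i ≠ ⊥ := by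
      by_contra hc
      push_neg at hc
      apply hAAi
      have hfe : (fun m => A' m i) = fun _ => (⊥ : Rmax) := funext hc
      calc AA i = ⨆ m, A' m i := rfl
      _ = ⊥ := by rw [hfe]; exact ciSup_const
    obtain ⟨m0, hm0⟩ := hex0
    have hwit : ∀ m, ∃ j, A' (m0 + m) i + x i ≤ B' (m0 + m) j + x j := by
      intro m
      have hnb : A' (m0 + m) i ≠ ⊥ := by
        intro hbb
        apply hm0
        have := hA'chain i m0 (m0 + m) (Nat.le_add_right _ _)
        rw [hbb] at this
        exact le_bot_iff.mp this
      obtain ⟨al, hal⟩ : ∃ r : ℝ, A' (m0 + m) i = (r : Rmax) :=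
        ⟨_, (WithBot.coe_unbot _ hnb).symm⟩
      have h1 := (hmem' (m0 + m) x).mp (hxm (m0 + m))
      have h2 : A' (m0 + m) i + x i ≤ Finset.univ.sup (fun j => B' (m0 + m) j + x j) :=
        le_trans (Finset.le_sup (f := fun i => A' (m0 + m) i + x i) (Finset.mem_univ i)) h1
      have hlt : (⊥ : Rmax) < A' (m0 + m) i + x i := by
        rw [hal, hxi', ← WithBot.coe_add]
        exact WithBot.bot_lt_coe _
      obtain ⟨j, _, hj⟩ := (Finset.le_sup_iff hlt).mp h2
      exact ⟨j, hj⟩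
    choose w hw using hwit
    obtain ⟨js, hjs⟩ : ∃ j, {m | w m = j}.Infinite := by
      obtain ⟨j, hj⟩ := Finite.exists_infinite_fiber w
      exact ⟨j, Set.infinite_coe_iff.mp hj⟩
    have claim1 : ∀ M, AA i + x i ≤ B' M js + x js := by
      intro M
      have hall : ∀ t, A' t i + x i ≤ B' M js + x js := by
        intro t
        obtain ⟨m', hm'fib, hm'gt⟩ := hjs.exists_gt (max M t)
        have h5 : M ≤ m0 + m' := by
          have := le_max_left M t; omega
        have h6 : t ≤ m0 + m' := by
          have := le_max_right M t; omega
        calc A' t i + x i ≤ A' (m0 + m') i + x i :=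
              add_le_add_left (hA'chain i t (m0 + m') h6) _
        _ ≤ B' (m0 + m') (w m') + x (w m') := hw m'
        _ = B' (m0 + m') js + x js := by rw [hm'fib]
        _ ≤ B' M js + x js := add_le_add_left (hB'chain js M (m0 + m') h5) _
      by_cases hb : B' M js + x js = ⊥
      · exfalso
        have hz := hall m0
        rw [hb] at hz
        rcases WithBot.add_eq_bot.mp (le_bot_iff.mp hz) with h | h
        exacts [hm0 h, hxi h]
      obtain ⟨rho, hrho⟩ : ∃ r : ℝ, B' M js + x js = (r : Rmax) :=
        ⟨_, (WithBot.coe_unbot _ hb).symm⟩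
      have h7 : ∀ t, A' t i ≤ ((rho - xi : ℝ) : Rmax) := by
        intro t
        have := hall t
        rw [hrho, hxi'] at this
        exact (trop_add_coe_le_coe_iff _ _ _).mp this
      have h8 : AA i ≤ ((rho - xi : ℝ) : Rmax) := ciSup_le h7
      rw [hrho, hxi']
      exact (trop_add_coe_le_coe_iff _ _ _).mpr h8
    have hxjs : x js ≠ ⊥ := by
      intro hb
      have := claim1 0
      rw [hb, WithBot.add_bot] at this
      rcases WithBot.add_eq_bot.mp (le_bot_iff.mp this) with h | h
      exacts [hAAi h, hxi h]
    obtain ⟨eta, heta⟩ : ∃ r : ℝ, x js = (r : Rmax) := ⟨_, (WithBot.coe_unbot _ hxjs).symm⟩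
    obtain ⟨kap, hkap⟩ : ∃ r : ℝ, AA i = (r : Rmax) := ⟨_, (WithBot.coe_unbot _ hAAi).symm⟩
    have h9 : ∀ M, ((kap + xi - eta : ℝ) : Rmax) ≤ B' M js := by
      intro M
      have := claim1 M
      rw [hkap, hxi', heta, ← WithBot.coe_add] at this
      exact (trop_coe_le_add_coe_iff _ _ _).mp this
    have h10 : ((kap + xi - eta : ℝ) : Rmax) ≤ BB js := le_ciInf h9
    calc AA i + x i = ((kap + xi : ℝ) : Rmax) := by rw [hkap, hxi', ← WithBot.coe_add]
    _ ≤ BB js + ((eta : ℝ) : Rmax) := (trop_coe_le_add_coe_iff _ _ _).mpr h10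
    _ = BB js + x js := by rw [heta]
    _ ≤ Finset.univ.sup (fun j => BB j + x j) :=
        Finset.le_sup (f := fun j => BB j + x j) (Finset.mem_univ js)

end mainlemma


lemma trop_exists_full_vec {n : ℕ} (hn : 0 < n) (V : Set (Fin n → Rmax)) (hV : IsTropCone V)
    (hsupp : HasFullSupport V) : ∃ v : Fin n → ℝ, (fun i => ((v i : ℝ) : Rmax)) ∈ V := by
  classical
  have key : ∀ s : Finset (Fin n), ∃ u ∈ V, ∀ k ∈ s, u k ≠ ⊥ := by
    intro s
    induction s using Finset.induction_on with
    | empty =>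
        have hnemp : Nonempty (Fin n) := Fin.pos_iff_nonempty.mp hn
        obtain ⟨k0⟩ := hnemp
        obtain ⟨wv, hw, _⟩ := hsupp k0
        exact ⟨wv, hw, by simp⟩
    | @insert a s ha ih =>
        obtain ⟨u, hu, hus⟩ := ih
        obtain ⟨wv, hw, hwk⟩ := hsupp a
        refine ⟨fun i => max ((0 : Rmax) + u i) ((0 : Rmax) + wv i),
          hV u hu wv hw 0 0, ?_⟩
        intro k hk
        simp only [zero_add]
        rcases Finset.mem_insert.mp hk with h | h
        · subst h
          intro hb
          exact hwk (max_eq_bot.mp hb).2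
        · intro hb
          exact hus k h (max_eq_bot.mp hb).1
  obtain ⟨u, hu, hallu⟩ := key Finset.univ
  refine ⟨fun k => (u k).unbot (hallu k (Finset.mem_univ k)), ?_⟩
  have he : (fun i => (((u i).unbot (hallu i (Finset.mem_univ i)) : ℝ) : Rmax)) = u :=
    funext fun k => WithBot.coe_unbot _ _
  rw [he]
  exact hu



/-- the intersection of a decreasing sequence of half-spaces all
containing a max-plus cone with full support is a half-space. -/
theorem stmt_6 {n : ℕ} (V : Set (Fin n → Rmax)) (hV : IsTropCone V)
    (hsupp : HasFullSupport V) (H : ℕ → Set (Fin n → Rmax))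
    (hHS : ∀ r, IsHalfSpace (H r)) (hdec : ∀ r, H (r + 1) ⊆ H r)
    (hVH : ∀ r, V ⊆ H r) :
    ∃ H' : Set (Fin n → Rmax), IsHalfSpace H' ∧ H' = ⋂ r, H r := by
  classical
  by_cases hall : ∀ r, H r = Set.univ
  · refine ⟨Set.univ, ⟨(fun _ => (⊥ : Rmax)), (fun _ => (⊥ : Rmax)), ?_⟩, ?_⟩
    · have huniv : ({x : Fin n → Rmax | Finset.univ.sup (fun i => (⊥ : Rmax) + x i) ≤
          Finset.univ.sup (fun j => (⊥ : Rmax) + x j)}) = Set.univ :=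
        Set.eq_univ_of_forall fun x => Set.mem_setOf_eq ▸ le_rfl
      exact huniv.symm
    · ext x
      simp [hall]
  · push_neg at hall
    obtain ⟨m0, hm0⟩ := hall
    have hchain : ∀ r s, r ≤ s → H s ⊆ H r := by
      intro r s h
      induction s, h using Nat.le_induction with
      | base => exact subset_rfl
      | succ s hs ih => exact (hdec s).trans ih
    have hn : 0 < n := by
      by_contra hzero
      push_neg at hzero
      have hz : n = 0 := Nat.le_zero.mp hzero
      subst hz
      apply hm0
      obtain ⟨a, b, hab⟩ := hHS m0
      rw [hab]
      apply Set.eq_univ_of_forall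
      intro x
      show Finset.univ.sup (fun i => a i + x i) ≤ Finset.univ.sup (fun j => b j + x j)
      rw [Finset.univ_eq_empty, Finset.sup_empty, Finset.sup_empty]
    obtain ⟨v, hvV⟩ := trop_exists_full_vec hn V hV hsupp
    have hres := trop_main hn v (fun r => H (m0 + r))
      (fun r => hHS (m0 + r))
      (fun r s h => hchain (m0 + r) (m0 + s) (by omega))
      (fun r => hVH (m0 + r) hvV)
      (fun r hyp => hm0 (Set.eq_univ_of_univ_subset
        (hyp ▸ hchain m0 (m0 + r) (Nat.le_add_right _ _))))
    obtain ⟨H', hH'1, hH'2⟩ := hres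
    refine ⟨H', hH'1, ?_⟩
    rw [hH'2]
    ext x
    simp only [Set.mem_iInter]
    constructor
    · intro h r
      exact hchain r (m0 + r) (Nat.le_add_left _ _) (h r)
    · intro h r
      exact h (m0 + r)
end
end

section
/- Let V ⊆ ℝ_max^n be a max-plus cone with full support. If V is contained in a half-space H, then there exists a half-space H' with V ⊆ H' ⊆ H such that H' is minimal for inclusion among half-spaces containing V, i.e., there is no half-space H'' with V ⊆ H'' and H'' strictly contained in H'. -/
noncomputable section

-- ===================== auxiliary lemmas =====================
section Aux

open Finset

private lemma sup_eq_single {ι : Type} (s : Finset ι) (f : ι → Rmax) (i₀ : ι) (hi : i₀ ∈ s)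
    (h : ∀ k ∈ s, k ≠ i₀ → f k = ⊥) : s.sup f = f i₀ := by
  apply le_antisymm
  · rw [Finset.sup_le_iff]
    intro k hk
    rcases eq_or_ne k i₀ with rfl | hne
    · exact le_rfl
    · rw [h k hk hne]; exact bot_le
  · exact Finset.le_sup hi

private lemma exists_achiever {ι : Type} (s : Finset ι) (f : ι → Rmax) (h : s.sup f ≠ ⊥) :
    ∃ i ∈ s, s.sup f = f i := by
  rcases s.eq_empty_or_nonempty with rfl | hne
  · simp at h
  · exact Finset.exists_mem_eq_sup s hne f

private lemma sup_indicator {ι : Type} [Fintype ι] [DecidableEq ι] (T : Finset ι) (g : ι → Rmax)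
    (x : ι → Rmax) :
    Finset.univ.sup (fun i => (if i ∈ T then g i else ⊥) + x i)
      = T.sup (fun i => g i + x i) := by
  apply le_antisymm
  · rw [Finset.sup_le_iff]
    intro k _
    by_cases hk : k ∈ T
    · rw [if_pos hk]; exact Finset.le_sup (f := fun i => g i + x i) hk
    · rw [if_neg hk, WithBot.bot_add]; exact bot_le
  · rw [Finset.sup_le_iff]
    intro k hk
    have h1 : (if k ∈ T then g k else ⊥) + x k = g k + x k := by rw [if_pos hk]
    calc g k + x k = _ := h1.symm
    _ ≤ _ := Finset.le_sup (f := fun i => (if i ∈ T then g i else ⊥) + x i) (Finset.mem_univ k)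

private lemma sup_add_const {ι : Type} (s : Finset ι) (f : ι → Rmax) (k : ℝ) :
    s.sup (fun i => f i + (k : Rmax)) = s.sup f + (k : Rmax) := by
  rcases eq_or_ne (s.sup f) ⊥ with h | h
  · rw [h, WithBot.bot_add, ← le_bot_iff, Finset.sup_le_iff]
    rw [← le_bot_iff, Finset.sup_le_iff] at h
    intro b hb
    have := h b hb
    rw [le_bot_iff] at this ⊢
    rw [this, WithBot.bot_add]
  · rcases eq_or_ne s ∅ with rfl|hne
    · simp at h
    · obtain ⟨i, hi, hsup⟩ := Finset.exists_mem_eq_sup s (Finset.nonempty_iff_ne_empty.2 hne) f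
      apply le_antisymm
      · rw [Finset.sup_le_iff]
        intro b hb
        exact add_le_add_left (Finset.le_sup hb) _
      · rw [hsup]
        exact Finset.le_sup (f := fun i => f i + (k:Rmax)) hi

private lemma coe_unbot'_eq {x : Rmax} (h : x ≠ ⊥) : ((WithBot.unbotD 0 x : ℝ) : Rmax) = x := by
  lift x to ℝ using h
  rfl

private lemma isHalfSpace_form {n : ℕ} (T S : Finset (Fin n)) (av bv : Fin n → Rmax) :
    IsHalfSpace {x | T.sup (fun i => av i + x i) ≤ S.sup (fun j => bv j + x j)} := by
  classical
  refine ⟨fun i => if i ∈ T then av i else ⊥, fun j => if j ∈ S then bv j else ⊥, ?_⟩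
  ext x
  simp only [Set.mem_setOf_eq, sup_indicator]

private lemma canon {n : ℕ} (V : Set (Fin n → Rmax)) (hsupp : ∀ k, ∃ v ∈ V, v k ≠ ⊥)
    (uu : Fin n → ℝ) (K : Set (Fin n → Rmax)) (hKhs : IsHalfSpace K) (hVK : V ⊆ K)
    (hKuniv : K ≠ Set.univ) :
    ∃ (T S : Finset (Fin n)) (e : Fin n → ℝ),
      T.Nonempty ∧ S.Nonempty ∧ Disjoint T S ∧ K = halfSpace T S e ∧
      S.sup (fun j => ((e j : Rmax)) + ((uu j : ℝ) : Rmax)) = 0 := by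
  classical
  obtain ⟨c, d, hK⟩ := hKhs
  set ct : Fin n → Rmax := fun i => max (c i) (d i) with hctdef
  have hctd : ∀ i, d i ≤ ct i := fun i => le_max_right _ _
  -- K in terms of ct
  have hKct : ∀ x, x ∈ K ↔ Finset.univ.sup (fun i => ct i + x i)
      ≤ Finset.univ.sup (fun j => d j + x j) := by
    intro x
    rw [hK]
    simp only [Set.mem_setOf_eq]
    have hsplit : Finset.univ.sup (fun i => ct i + x i)
        = max (Finset.univ.sup (fun i => c i + x i)) (Finset.univ.sup (fun j => d j + x j)) := by
      rw [← Finset.sup_sup]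
      congr 1
      funext i
      show max (c i) (d i) + x i = max (c i + x i) (d i + x i)
      exact (max_add_add_right _ _ _).symm
    constructor
    · intro h
      rw [hsplit]
      exact max_le h le_rfl
    · intro h
      rw [hsplit] at h
      exact le_trans (le_max_left _ _) h
  set T : Finset (Fin n) := Finset.univ.filter (fun i => d i < ct i) with hTdef
  set S : Finset (Fin n) := Finset.univ.filter (fun i => d i = ct i ∧ ct i ≠ ⊥) with hSdef
  have hTmem : ∀ i, i ∈ T ↔ d i < ct i := by intro i; simp [hTdef]
  have hSmem : ∀ i, i ∈ S ↔ d i = ct i ∧ ct i ≠ ⊥ := by intro i; simp [hSdef]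
  have hctT : ∀ i ∈ T, ct i ≠ ⊥ := by
    intro i hi
    have := (hTmem i).1 hi
    exact fun h => (by rw [h] at this; exact not_lt_bot this)
  have hctS : ∀ i ∈ S, ct i ≠ ⊥ := fun i hi => ((hSmem i).1 hi).2
  have hrest : ∀ i, i ∉ T → i ∉ S → ct i = ⊥ := by
    intro i hiT hiS
    by_contra hne
    rcases lt_or_eq_of_le (hctd i) with h | h
    · exact hiT ((hTmem i).2 h)
    · exact hiS ((hSmem i).2 ⟨h, hne⟩)
  set e0 : Fin n → ℝ := fun i => WithBot.unbotD 0 (ct i) with he0def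
  have hct : ∀ i, ct i ≠ ⊥ → ((e0 i : ℝ) : Rmax) = ct i := fun i h => coe_unbot'_eq h
  -- step A : K = halfSpace T S e0
  have hstepA : K = halfSpace T S e0 := by
    ext x
    rw [hKct, halfSpace, Set.mem_setOf_eq]
    constructor
    · intro hx
      rcases eq_or_ne (Finset.univ.sup (fun j => d j + x j)) ⊥ with hb | hb
      · have hTb : T.sup (fun i => ((e0 i:ℝ) : Rmax) + x i) ≤ ⊥ := by
          refine Finset.sup_le fun i hi => ?_
          rw [hct i (hctT i hi)]
          calc ct i + x i ≤ _ := Finset.le_sup (f := fun i => ct i + x i) (Finset.mem_univ i)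
          _ ≤ _ := hx
          _ ≤ ⊥ := le_of_eq hb
        exact hTb.trans bot_le
      · obtain ⟨j, _, hjsup⟩ := exists_achiever _ _ hb
        have hdj : d j + x j ≠ ⊥ := by rw [← hjsup]; exact hb
        have hdjb : d j ≠ ⊥ := fun h => hdj (by rw [h, WithBot.bot_add])
        have hxj : x j ≠ ⊥ := fun h => hdj (by rw [h, WithBot.add_bot])
        have hctj : ct j ≠ ⊥ := fun h => hdjb (le_bot_iff.1 (h ▸ hctd j))
        have hjS : j ∈ S := by
          by_contra hjS
          have hlt0 : d j < ct j :=
            lt_of_le_of_ne (hctd j) (fun h => hjS ((hSmem j).2 ⟨h, hctj⟩))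
          obtain ⟨xr, hxr⟩ := WithBot.ne_bot_iff_exists.1 hxj
          have hlt : d j + x j < ct j + x j := by
            rw [← hxr]; exact WithBot.add_lt_add_right WithBot.coe_ne_bot hlt0
          have hge : ct j + x j ≤ d j + x j := by
            calc ct j + x j ≤ _ := Finset.le_sup (f := fun i => ct i + x i) (Finset.mem_univ j)
            _ ≤ _ := hx
            _ = d j + x j := hjsup
          exact absurd hge (not_le_of_gt hlt)
        have hctjd : d j = ct j := ((hSmem j).1 hjS).1
        calc T.sup (fun i => ((e0 i:ℝ):Rmax) + x i)
            ≤ Finset.univ.sup (fun i => ct i + x i) := by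
              refine Finset.sup_le fun i hi => ?_
              rw [hct i (hctT i hi)]
              exact Finset.le_sup (f := fun i => ct i + x i) (Finset.mem_univ i)
          _ ≤ Finset.univ.sup (fun j => d j + x j) := hx
          _ = d j + x j := hjsup
          _ = ct j + x j := by rw [hctjd]
          _ = ((e0 j:ℝ):Rmax) + x j := by rw [hct j hctj]
          _ ≤ S.sup (fun j => ((e0 j:ℝ):Rmax) + x j) :=
              Finset.le_sup (f := fun j => ((e0 j:ℝ):Rmax) + x j) hjS
    · intro hx
      have h1 : Finset.univ.sup (fun i => ct i + x i)
          ≤ S.sup (fun j => ((e0 j:ℝ):Rmax) + x j) := by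
        refine Finset.sup_le fun i _ => ?_
        by_cases hT : i ∈ T
        · rw [← hct i (hctT i hT)]
          exact le_trans (Finset.le_sup (f := fun i => ((e0 i:ℝ):Rmax) + x i) hT) hx
        · by_cases hS : i ∈ S
          · rw [← hct i (hctS i hS)]
            exact Finset.le_sup (f := fun j => ((e0 j:ℝ):Rmax) + x j) hS
          · rw [hrest i hT hS, WithBot.bot_add]; exact bot_le
      have h2 : S.sup (fun j => ((e0 j:ℝ):Rmax) + x j)
          ≤ Finset.univ.sup (fun j => d j + x j) := by
        refine Finset.sup_le fun j hj => ?_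
        rw [hct j (hctS j hj), ← ((hSmem j).1 hj).1]
        exact Finset.le_sup (f := fun j => d j + x j) (Finset.mem_univ j)
      exact h1.trans h2
  -- T nonempty
  have hTne : T.Nonempty := by
    rw [Finset.nonempty_iff_ne_empty]
    intro hTe
    apply hKuniv
    ext x
    simp only [Set.mem_univ, iff_true]
    rw [hKct]
    refine Finset.sup_le fun i _ => ?_
    have hiT : i ∉ T := by rw [hTe]; exact Finset.notMem_empty i
    by_cases hS : i ∈ S
    · rw [← ((hSmem i).1 hS).1]
      exact Finset.le_sup (f := fun j => d j + x j) (Finset.mem_univ i)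
    · rw [hrest i hiT hS, WithBot.bot_add]; exact bot_le
  -- S nonempty
  have hSne : S.Nonempty := by
    rw [Finset.nonempty_iff_ne_empty]
    intro hSe
    obtain ⟨i, hiT⟩ := hTne
    obtain ⟨v, hvV, hvi⟩ := hsupp i
    have hvK : v ∈ K := hVK hvV
    rw [hstepA, halfSpace, Set.mem_setOf_eq, hSe] at hvK
    simp only [Finset.sup_empty] at hvK
    have : ((e0 i:ℝ):Rmax) + v i ≤ ⊥ :=
      le_trans (Finset.le_sup (f := fun i => ((e0 i:ℝ):Rmax) + v i) hiT) hvK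
    rw [le_bot_iff] at this
    obtain ⟨vr, hvr⟩ := WithBot.ne_bot_iff_exists.1 hvi
    rw [← hvr] at this
    exact (WithBot.coe_ne_bot : ((e0 i + vr : ℝ):Rmax) ≠ ⊥) (by push_cast at this ⊢; exact this)
  -- disjoint
  have hdisj : Disjoint T S := by
    rw [Finset.disjoint_left]
    intro i hiT hiS
    exact absurd ((hSmem i).1 hiS).1 (ne_of_lt ((hTmem i).1 hiT))
  -- normalization
  set mu : ℝ := S.sup' hSne (fun j => e0 j + uu j) with hmudef
  set e : Fin n → ℝ := fun i => e0 i - mu with hedef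
  have hshift : ∀ (A : Finset (Fin n)) (x : Fin n → Rmax),
      A.sup (fun i => ((e i : ℝ) : Rmax) + x i)
        = A.sup (fun i => ((e0 i : ℝ) : Rmax) + x i) + ((-mu : ℝ) : Rmax) := by
    intro A x
    rw [← sup_add_const]
    congr 1
    funext i
    have h1 : ((e i : ℝ) : Rmax) = ((e0 i : ℝ) : Rmax) + ((-mu : ℝ) : Rmax) := by
      rw [← WithBot.coe_add]
      norm_num [hedef, sub_eq_add_neg]
    rw [h1]
    exact add_right_comm _ _ _
  have hsame : halfSpace T S e = halfSpace T S e0 := by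
    ext x
    rw [halfSpace, halfSpace, Set.mem_setOf_eq, Set.mem_setOf_eq, hshift T x, hshift S x]
    exact WithBot.add_le_add_iff_right WithBot.coe_ne_bot
  have hnorm : S.sup (fun j => ((e j : ℝ) : Rmax) + ((uu j : ℝ) : Rmax)) = 0 := by
    rw [hshift S (fun j => ((uu j : ℝ) : Rmax))]
    have hsup0 : S.sup (fun j => ((e0 j : ℝ) : Rmax) + ((uu j : ℝ) : Rmax)) = ((mu:ℝ) : Rmax) := by
      rw [hmudef, Finset.coe_sup' hSne]
      apply Finset.sup_congr rfl
      intro j _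
      show ((e0 j : ℝ):Rmax) + ((uu j : ℝ):Rmax) = ((e0 j + uu j : ℝ) : Rmax)
      push_cast
      try rfl
    rw [hsup0, ← WithBot.coe_add]
    norm_num
  exact ⟨T, S, e, hTne, hSne, hdisj, by rw [hstepA, hsame], hnorm⟩

private lemma coeff_mono {n : ℕ} (T S : Finset (Fin n)) (hdisj : Disjoint T S)
    (e e' : Fin n → ℝ) (K K' : Set (Fin n → Rmax))
    (hKeq : K = halfSpace T S e) (hK'eq : K' = halfSpace T S e')
    (hsub : K' ⊆ K) {i : Fin n} (hi : i ∈ T) {j : Fin n} (hj : j ∈ S) :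
    e i + e' j ≤ e j + e' i := by
  classical
  have hij : i ≠ j := fun h => (Finset.disjoint_left.1 hdisj) hi (h ▸ hj)
  set x : Fin n → Rmax :=
    fun k => if k = i then ((e' j : ℝ) : Rmax) else if k = j then ((e' i : ℝ):Rmax) else ⊥
    with hxdef
  have hxi : x i = ((e' j : ℝ):Rmax) := by rw [hxdef]; simp
  have hxj : x j = ((e' i : ℝ):Rmax) := by rw [hxdef]; simp [hij.symm]
  have hTsup : ∀ (f : Fin n → ℝ),
      T.sup (fun k => ((f k : ℝ):Rmax) + x k) = ((f i + e' j : ℝ) : Rmax) := by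
    intro f
    rw [sup_eq_single T _ i hi]
    · rw [hxi]; push_cast; try rfl
    · intro k hk hkne
      have hkj : k ≠ j := fun h => (Finset.disjoint_left.1 hdisj) hk (h ▸ hj)
      show ((f k:ℝ):Rmax) + x k = ⊥
      rw [hxdef]
      simp only [if_neg hkne, if_neg hkj]
      exact WithBot.add_bot _
  have hSsup : ∀ (f : Fin n → ℝ),
      S.sup (fun k => ((f k : ℝ):Rmax) + x k) = ((f j + e' i : ℝ) : Rmax) := by
    intro f
    rw [sup_eq_single S _ j hj]
    · rw [hxj]; push_cast; try rfl
    · intro k hk hkne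
      have hki : k ≠ i := fun h => (Finset.disjoint_left.1 hdisj) hi (h ▸ hk)
      show ((f k:ℝ):Rmax) + x k = ⊥
      rw [hxdef]
      simp only [if_neg hki, if_neg hkne]
      exact WithBot.add_bot _
  have hxK' : x ∈ K' := by
    rw [hK'eq]
    simp only [halfSpace, Set.mem_setOf_eq]
    rw [hTsup e', hSsup e']
    exact_mod_cast le_of_eq (add_comm _ _)
  have hxK := hsub hxK'
  rw [hKeq] at hxK
  simp only [halfSpace, Set.mem_setOf_eq] at hxK
  rw [hTsup e, hSsup e] at hxK
  exact_mod_cast hxK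

private lemma chain_min {α : Type} {c : Set (Set α)} (hc : IsChain (· ⊆ ·) c) :
    ∀ (F : Finset (Set α)), (∀ K ∈ F, K ∈ c) → F.Nonempty →
      ∃ M ∈ F, M ∈ c ∧ ∀ K ∈ F, M ⊆ K := by
  classical
  intro F
  induction F using Finset.induction_on with
  | empty => intro _ h; exact absurd h (by simp)
  | @insert a s ha ih =>
    intro hmem _
    rcases s.eq_empty_or_nonempty with rfl | hsne
    · refine ⟨a, Finset.mem_insert_self a ∅, hmem a (Finset.mem_insert_self a ∅), ?_⟩
      intro K hK
      rcases Finset.mem_insert.1 hK with rfl | h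
      · exact subset_rfl
      · exact absurd h (Finset.notMem_empty K)
    · obtain ⟨M, hMs, hMc, hMmin⟩ := ih (fun K hK => hmem K (Finset.mem_insert_of_mem hK)) hsne
      have hac : a ∈ c := hmem a (Finset.mem_insert_self a s)
      rcases hc.total hac hMc with h | h
      · refine ⟨a, Finset.mem_insert_self a s, hac, ?_⟩
        intro K hK
        rcases Finset.mem_insert.1 hK with rfl | hKs
        · exact subset_rfl
        · exact h.trans (hMmin K hKs)
      · refine ⟨M, Finset.mem_insert_of_mem hMs, hMc, ?_⟩
        intro K hK
        rcases Finset.mem_insert.1 hK with rfl | hKs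
        · exact h
        · exact hMmin K hKs

private lemma exists_finite_point {n : ℕ} (hn : 0 < n) (V : Set (Fin n → Rmax)) (hV : IsTropCone V)
    (hsupp : ∀ k, ∃ v ∈ V, v k ≠ ⊥) :
    ∃ uu : Fin n → ℝ, (fun i => ((uu i : ℝ) : Rmax)) ∈ V := by
  classical
  have key : ∀ (s : Finset (Fin n)), ∃ w ∈ V, ∀ i ∈ s, w i ≠ ⊥ := by
    intro s
    induction s using Finset.induction_on with
    | empty =>
      obtain ⟨v, hv, _⟩ := hsupp ⟨0, hn⟩
      exact ⟨v, hv, by simp⟩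
    | @insert a s ha ih =>
      obtain ⟨w, hwV, hw⟩ := ih
      obtain ⟨v, hvV, hv⟩ := hsupp a
      refine ⟨fun i => max ((0:Rmax) + w i) ((0:Rmax) + v i), hV w hwV v hvV 0 0, ?_⟩
      intro i hi hmax
      simp only [zero_add] at hmax
      rw [_root_.max_eq_bot] at hmax
      rcases Finset.mem_insert.1 hi with rfl | his
      · exact hv hmax.2
      · exact hw i his hmax.1
  obtain ⟨w, hwV, hw⟩ := key Finset.univ
  refine ⟨fun i => WithBot.unbotD 0 (w i), ?_⟩
  have heq : (fun i => ((WithBot.unbotD 0 (w i) : ℝ) : Rmax)) = w :=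
    funext fun i => coe_unbot'_eq (hw i (Finset.mem_univ i))
  rw [heq]
  exact hwV

end Aux

/-- existence of a minimal half-space between a full-support
max-plus cone and a half-space containing it. -/
theorem stmt_7 {n : ℕ} (V : Set (Fin n → Rmax)) (hV : IsTropCone V)
    (hsupp : HasFullSupport V) (H : Set (Fin n → Rmax)) (hHS : IsHalfSpace H)
    (hVH : V ⊆ H) :
    ∃ H' : Set (Fin n → Rmax), IsHalfSpace H' ∧ V ⊆ H' ∧ H' ⊆ H ∧
      ¬ ∃ H'' : Set (Fin n → Rmax), IsHalfSpace H'' ∧ V ⊆ H'' ∧ H'' ⊂ H' := by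
  classical
  rcases Nat.eq_zero_or_pos n with hn | hn
  · -- n = 0 : every half-space is the whole space
    subst hn
    have huniv : ∀ (a b : Fin 0 → Rmax),
        {x : Fin 0 → Rmax | Finset.univ.sup (fun i => a i + x i)
          ≤ Finset.univ.sup (fun j => b j + x j)} = Set.univ := by
      intro a b
      ext x
      simp
    refine ⟨H, hHS, hVH, subset_rfl, ?_⟩
    rintro ⟨H'', ⟨a, b, hab⟩, -, hss⟩
    obtain ⟨aH, bH, hH⟩ := hHS
    rw [hab, huniv] at hss
    rw [hH, huniv] at hss
    exact (lt_irrefl _ hss)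
  · obtain ⟨uu, huu⟩ := exists_finite_point hn V hV hsupp
    set P : Set (Set (Fin n → Rmax)) := {K | IsHalfSpace K ∧ V ⊆ K ∧ K ⊆ H} with hPdef
    have hHP : H ∈ P := ⟨hHS, hVH, subset_rfl⟩
    have hzorn : ∀ c ⊆ P, IsChain (· ⊆ ·) c → ∃ lb ∈ P, ∀ s ∈ c, lb ⊆ s := by
      intro c hcP hchain
      rcases Set.eq_empty_or_nonempty c with rfl | ⟨K₁, hK₁⟩
      · exact ⟨H, hHP, by simp⟩
      by_cases hmin : ∃ M ∈ c, ∀ K ∈ c, M ⊆ K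
      · obtain ⟨M, hMc, hMlb⟩ := hmin
        exact ⟨M, hcP hMc, hMlb⟩
      push_neg at hmin
      obtain ⟨K₂, hK₂c, hK₂n⟩ := hmin K₁ hK₁
      have hK₂sub : K₂ ⊆ K₁ := by
        rcases hchain.total hK₂c hK₁ with h | h
        · exact h
        · exact absurd h hK₂n
      -- the coinitial sub-chain of proper half-spaces
      set c'' : Set (Set (Fin n → Rmax)) := {K | K ∈ c ∧ K ⊆ K₂} with hc''def
      have hK₂c'' : K₂ ∈ c'' := ⟨hK₂c, subset_rfl⟩
      have hc''sub : ∀ K ∈ c'', K ∈ c := fun K h => h.1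
      have hcoini : ∀ K ∈ c, ∃ K' ∈ c'', K' ⊆ K := by
        intro K hK
        rcases hchain.total hK hK₂c with h | h
        · exact ⟨K, ⟨hK, h⟩, subset_rfl⟩
        · exact ⟨K₂, hK₂c'', h⟩
      have hproper : ∀ K ∈ c'', K ≠ Set.univ := by
        rintro K ⟨hKc, hKsub⟩ rfl
        exact hK₂n (fun x _ => hKsub (Set.mem_univ x))
      have hsupp' : ∀ k, ∃ v ∈ V, v k ≠ ⊥ := hsupp
      have hcanon : ∀ K ∈ c'', ∃ (T S : Finset (Fin n)) (e : Fin n → ℝ),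
          T.Nonempty ∧ S.Nonempty ∧ Disjoint T S ∧ K = halfSpace T S e ∧
          S.sup (fun j => ((e j : Rmax)) + ((uu j : ℝ) : Rmax)) = 0 :=
        fun K hK => canon V hsupp' uu K (hcP (hc''sub K hK)).1
          (hcP (hc''sub K hK)).2.1 (hproper K hK)
      choose! Tf Sf ef hTne hSne hdisjf hKeqf hnormf using hcanon
      -- pigeonhole on the (finitely many) signatures
      have hsig : ∃ TS : Finset (Fin n) × Finset (Fin n), ∀ K ∈ c'',
          ∃ K' ∈ c'', K' ⊆ K ∧ Tf K' = TS.1 ∧ Sf K' = TS.2 := by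
        by_contra hcon
        push_neg at hcon
        choose! Kf hKfmem hKfprop using hcon
        set F : Finset (Set (Fin n → Rmax)) := Finset.image Kf Finset.univ with hFdef
        have hFne : F.Nonempty := ⟨Kf (∅, ∅), Finset.mem_image_of_mem _ (Finset.mem_univ _)⟩
        have hFc : ∀ K ∈ F, K ∈ c := by
          intro K hK
          obtain ⟨σ, -, rfl⟩ := Finset.mem_image.1 hK
          exact hc''sub _ (hKfmem σ)
        obtain ⟨Kmin, hKminF, -, hKminall⟩ := chain_min hchain F hFc hFne
        obtain ⟨σ₀, -, hσ₀⟩ := Finset.mem_image.1 hKminF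
        have hKminc'' : Kmin ∈ c'' := hσ₀ ▸ hKfmem σ₀
        have hsubmin : Kmin ⊆ Kf (Tf Kmin, Sf Kmin) :=
          hKminall _ (Finset.mem_image_of_mem _ (Finset.mem_univ _))
        exact hKfprop (Tf Kmin, Sf Kmin) Kmin hKminc'' hsubmin rfl rfl
      obtain ⟨⟨Tst, Sst⟩, hsig⟩ := hsig
      set D : Set (Set (Fin n → Rmax)) := {K | K ∈ c'' ∧ Tf K = Tst ∧ Sf K = Sst} with hDdef
      obtain ⟨K₀D, hK₀D⟩ : ∃ K, K ∈ D := by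
        obtain ⟨K', h1, _, h3, h4⟩ := hsig K₂ hK₂c''
        exact ⟨K', h1, h3, h4⟩
      have hDc'' : ∀ K ∈ D, K ∈ c'' := fun K h => h.1
      have hDc : ∀ K ∈ D, K ∈ c := fun K h => hc''sub K h.1
      have hDcoini : ∀ K ∈ c, ∃ K' ∈ D, K' ⊆ K := by
        intro K hK
        obtain ⟨K', hK', hsub'⟩ := hcoini K hK
        obtain ⟨K'', hK'', hsub'', h3, h4⟩ := hsig K' hK'
        exact ⟨K'', ⟨hK'', h3, h4⟩, hsub''.trans hsub'⟩
      have hDKeq : ∀ K ∈ D, K = halfSpace Tst Sst (ef K) := by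
        intro K hK
        rw [← hK.2.1, ← hK.2.2]
        exact hKeqf K hK.1
      have hDnorm : ∀ K ∈ D,
          Sst.sup (fun j => ((ef K j : Rmax)) + ((uu j : ℝ) : Rmax)) = 0 := by
        intro K hK
        rw [← hK.2.2]
        exact hnormf K hK.1
      have hTstne : Tst.Nonempty := by
        rw [← hK₀D.2.1]; exact hTne K₀D hK₀D.1
      have hSstne : Sst.Nonempty := by
        rw [← hK₀D.2.2]; exact hSne K₀D hK₀D.1
      have hdisjst : Disjoint Tst Sst := by
        rw [← hK₀D.2.1, ← hK₀D.2.2]; exact hdisjf K₀D hK₀D.1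
      obtain ⟨i₀, hi₀⟩ := hTstne
      have hVmem : ∀ K ∈ D, ∀ x ∈ V,
          Tst.sup (fun i => ((ef K i : Rmax)) + x i)
            ≤ Sst.sup (fun j => ((ef K j : Rmax)) + x j) := by
        intro K hK x hx
        have hxK : x ∈ K := (hcP (hDc K hK)).2.1 hx
        rw [hDKeq K hK] at hxK
        exact hxK
      -- bound coming from the finite point of V
      have hubound : ∀ K ∈ D, ∀ i ∈ Tst, ef K i + uu i ≤ 0 := by
        intro K hK i hi
        have h1 := hVmem K hK _ huu
        rw [hDnorm K hK] at h1
        have h2 : ((ef K i : Rmax)) + ((uu i : ℝ) : Rmax) ≤ 0 :=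
          le_trans (Finset.le_sup (f := fun i => ((ef K i : Rmax)) + ((uu i:ℝ):Rmax)) hi) h1
        rw [← WithBot.coe_add, ← WithBot.coe_zero, WithBot.coe_le_coe] at h2
        exact h2
      -- F1 : pairwise exchange inequality
      have hF1 : ∀ K ∈ D, ∀ K' ∈ D, K' ⊆ K → ∀ i ∈ Tst, ∀ j ∈ Sst,
          ef K i + ef K' j ≤ ef K j + ef K' i := by
        intro K hK K' hK' hsub i hi j hj
        exact coeff_mono Tst Sst hdisjst (ef K) (ef K') K K'
          (hDKeq K hK) (hDKeq K' hK') hsub hi hj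
      -- monotonicity on T
      have hmonoT : ∀ K ∈ D, ∀ K' ∈ D, K' ⊆ K → ∀ i ∈ Tst, ef K i ≤ ef K' i := by
        intro K hK K' hK' hsub i hi
        have hnK' := hDnorm K' hK'
        have hneb : Sst.sup (fun j => ((ef K' j : Rmax)) + ((uu j : ℝ):Rmax)) ≠ ⊥ := by
          rw [hnK', ← WithBot.coe_zero]
          exact WithBot.coe_ne_bot
        obtain ⟨j₁, hj₁, hj₁sup⟩ := exists_achiever _ _ hneb
        have h1 : ef K' j₁ + uu j₁ = 0 := by
          have h0 : ((ef K' j₁ : Rmax)) + ((uu j₁ : ℝ):Rmax) = 0 := by rw [← hj₁sup, hnK']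
          rw [← WithBot.coe_add, ← WithBot.coe_zero] at h0
          exact_mod_cast h0
        have h2 : ef K j₁ + uu j₁ ≤ 0 := by
          have h2' : ((ef K j₁ : Rmax)) + ((uu j₁ : ℝ):Rmax) ≤ 0 :=
            le_trans (Finset.le_sup
              (f := fun j => ((ef K j : Rmax)) + ((uu j : ℝ):Rmax)) hj₁)
              (le_of_eq (hDnorm K hK))
          rw [← WithBot.coe_add, ← WithBot.coe_zero, WithBot.coe_le_coe] at h2'
          exact h2'
        have h3 := hF1 K hK K' hK' hsub i hi j₁ hj₁
        linarith
      -- the limiting coefficients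
      set A : Fin n → Set ℝ := fun i => {r | ∃ K ∈ D, ef K i = r} with hAdef
      have hAne : ∀ i, (A i).Nonempty := fun i => ⟨ef K₀D i, K₀D, hK₀D, rfl⟩
      have hAbdd : ∀ i ∈ Tst, BddAbove (A i) := by
        intro i hi
        refine ⟨-uu i, ?_⟩
        rintro r ⟨K, hK, rfl⟩
        have := hubound K hK i hi
        linarith
      set ahat : Fin n → ℝ := fun i => sSup (A i) with hahatdef
      have hle_ahat : ∀ K ∈ D, ∀ i ∈ Tst, ef K i ≤ ahat i :=
        fun K hK i hi => le_csSup (hAbdd i hi) ⟨K, hK, rfl⟩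
      set G : Fin n → Set ℝ := fun j => {r | ∃ K ∈ D, ef K j - ef K i₀ = r} with hGdef
      have hGne : ∀ j, (G j).Nonempty := fun j => ⟨ef K₀D j - ef K₀D i₀, K₀D, hK₀D, rfl⟩
      have hGmono : ∀ K ∈ D, ∀ K' ∈ D, K' ⊆ K → ∀ j ∈ Sst,
          ef K' j - ef K' i₀ ≤ ef K j - ef K i₀ := by
        intro K hK K' hK' hsub j hj
        have := hF1 K hK K' hK' hsub i₀ hi₀ j hj
        linarith
      set bhat : Fin n → Rmax :=
        fun j => if BddBelow (G j) then (((ahat i₀ + sInf (G j) : ℝ)) : Rmax) else ⊥ with hbhatdef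
      set Kstar : Set (Fin n → Rmax) :=
        {x | Tst.sup (fun i => ((ahat i : ℝ) : Rmax) + x i)
          ≤ Sst.sup (fun j => bhat j + x j)} with hKstardef
      have hKstarHS : IsHalfSpace Kstar := isHalfSpace_form Tst Sst _ _
      -- (β) : Kstar is contained in every element of D
      have hbeta : ∀ K₀ ∈ D, Kstar ⊆ K₀ := by
        intro K₀ hK₀ x hx
        rw [hDKeq K₀ hK₀]
        simp only [halfSpace, Set.mem_setOf_eq]
        simp only [hKstardef, Set.mem_setOf_eq] at hx
        refine Finset.sup_le fun i hi => ?_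
        rcases eq_or_ne (x i) ⊥ with hxi | hxi
        · rw [hxi, WithBot.add_bot]; exact bot_le
        obtain ⟨xi, hxi'⟩ := WithBot.ne_bot_iff_exists.1 hxi
        have h1 : ((ahat i : ℝ):Rmax) + x i ≤ Sst.sup (fun j => bhat j + x j) :=
          le_trans (Finset.le_sup (f := fun i => ((ahat i : ℝ):Rmax) + x i) hi) hx
        have hne : Sst.sup (fun j => bhat j + x j) ≠ ⊥ := by
          intro h
          rw [h, le_bot_iff, ← hxi', ← WithBot.coe_add] at h1
          exact WithBot.coe_ne_bot h1
        obtain ⟨j₁, hj₁, hj₁sup⟩ := exists_achiever _ _ hne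
        have hbj₁ : bhat j₁ + x j₁ ≠ ⊥ := by rw [← hj₁sup]; exact hne
        have hxj₁ : x j₁ ≠ ⊥ := fun h => hbj₁ (by rw [h, WithBot.add_bot])
        obtain ⟨xj, hxj'⟩ := WithBot.ne_bot_iff_exists.1 hxj₁
        have hbb : BddBelow (G j₁) := by
          by_contra hb
          apply hbj₁
          have hbb0 : bhat j₁ = ⊥ := by simp only [hbhatdef]; rw [if_neg hb]
          rw [hbb0, WithBot.bot_add]
        have hbeq : bhat j₁ = ((ahat i₀ + sInf (G j₁) : ℝ) : Rmax) := by
          simp only [hbhatdef]; rw [if_pos hbb]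
        have hnum : ahat i + xi ≤ (ahat i₀ + sInf (G j₁)) + xj := by
          have h5 := h1.trans (le_of_eq hj₁sup)
          rw [hbeq, ← hxi', ← hxj', ← WithBot.coe_add, ← WithBot.coe_add,
            WithBot.coe_le_coe] at h5
          exact h5
        have hkey : ahat i₀ + sInf (G j₁) ≤ ef K₀ j₁ - ef K₀ i + ahat i := by
          apply le_of_forall_pos_le_add
          intro ε hε
          have hlta : (ahat i - ε : ℝ) < sSup (A i) := by
            have : sSup (A i) = ahat i := by simp only [hahatdef]
            rw [this]; linarith
          obtain ⟨ra, hraA, hra⟩ := exists_lt_of_lt_csSup (hAne i) hlta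
          obtain ⟨Ka, hKa, hKa'⟩ := hraA
          have hltb : (ahat i₀ - ε : ℝ) < sSup (A i₀) := by
            have : sSup (A i₀) = ahat i₀ := by simp only [hahatdef]
            rw [this]; linarith
          obtain ⟨rb, hrbA, hrb⟩ := exists_lt_of_lt_csSup (hAne i₀) hltb
          obtain ⟨Kb, hKb, hKb'⟩ := hrbA
          have hallc : ∀ K ∈ ({Ka, Kb, K₀} : Finset (Set (Fin n → Rmax))), K ∈ c := by
            intro K hK
            simp only [Finset.mem_insert, Finset.mem_singleton] at hK
            rcases hK with h | h | h
            · rw [h]; exact hDc Ka hKa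
            · rw [h]; exact hDc Kb hKb
            · rw [h]; exact hDc K₀ hK₀
          obtain ⟨K1, hK1mem, -, hK1all⟩ := chain_min hchain {Ka, Kb, K₀} hallc ⟨Ka, by simp⟩
          have hK1D : K1 ∈ D := by
            simp only [Finset.mem_insert, Finset.mem_singleton] at hK1mem
            rcases hK1mem with h | h | h
            · rw [h]; exact hKa
            · rw [h]; exact hKb
            · rw [h]; exact hK₀
          have hsKa : K1 ⊆ Ka := hK1all Ka (by simp)
          have hsKb : K1 ⊆ Kb := hK1all Kb (by simp)
          have hsK₀ : K1 ⊆ K₀ := hK1all K₀ (by simp)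
          have e1 : ahat i - ε ≤ ef K1 i := by
            have := hmonoT Ka hKa K1 hK1D hsKa i hi
            rw [← hKa'] at hra
            linarith
          have e2 : ahat i₀ - ε ≤ ef K1 i₀ := by
            have := hmonoT Kb hKb K1 hK1D hsKb i₀ hi₀
            rw [← hKb'] at hrb
            linarith
          have e3 : sInf (G j₁) ≤ ef K1 j₁ - ef K1 i₀ := csInf_le hbb ⟨K1, hK1D, rfl⟩
          have e4 := hF1 K₀ hK₀ K1 hK1D hsK₀ i hi j₁ hj₁
          have e5 : ef K1 i ≤ ahat i := hle_ahat K1 hK1D i hi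
          linarith
        have hfinal : ef K₀ i + xi ≤ ef K₀ j₁ + xj := by linarith
        rw [← hxi']
        calc ((ef K₀ i : Rmax)) + ((xi : ℝ) : Rmax)
            = ((ef K₀ i + xi : ℝ) : Rmax) := (WithBot.coe_add _ _).symm
          _ ≤ ((ef K₀ j₁ + xj : ℝ) : Rmax) := WithBot.coe_le_coe.2 hfinal
          _ = ((ef K₀ j₁ : Rmax)) + ((xj : ℝ) : Rmax) := WithBot.coe_add _ _
          _ = ((ef K₀ j₁ : Rmax)) + x j₁ := by rw [hxj']
          _ ≤ Sst.sup (fun j => ((ef K₀ j : Rmax)) + x j) :=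
              Finset.le_sup (f := fun j => ((ef K₀ j : Rmax)) + x j) hj₁
      -- (α) : V is contained in Kstar
      have halpha : V ⊆ Kstar := by
        intro x hxV
        simp only [hKstardef, Set.mem_setOf_eq]
        refine Finset.sup_le fun i hi => ?_
        rcases eq_or_ne (x i) ⊥ with hxi | hxi
        · rw [hxi, WithBot.add_bot]; exact bot_le
        obtain ⟨xi, hxi'⟩ := WithBot.ne_bot_iff_exists.1 hxi
        by_contra hcon
        rw [not_le] at hcon
        have hKc : ∃ Kc ∈ D, Sst.sup (fun j => bhat j + x j) < ((ef Kc i : Rmax)) + x i := by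
          by_contra hall
          push_neg at hall
          have h0 : ((ef K₀D i : Rmax)) + x i ≤ Sst.sup (fun j => bhat j + x j) := hall K₀D hK₀D
          have hne : Sst.sup (fun j => bhat j + x j) ≠ ⊥ := by
            intro h
            rw [h, le_bot_iff, ← hxi', ← WithBot.coe_add] at h0
            exact WithBot.coe_ne_bot h0
          obtain ⟨s, hs⟩ := WithBot.ne_bot_iff_exists.1 hne
          have hballK : ∀ r ∈ A i, r ≤ s - xi := by
            rintro r ⟨K, hK, rfl⟩
            have h9 := hall K hK
            rw [← hs, ← hxi', ← WithBot.coe_add, WithBot.coe_le_coe] at h9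
            linarith
          have h2 : sSup (A i) ≤ s - xi := csSup_le (hAne i) hballK
          have h3 : ahat i ≤ s - xi := by
            have : ahat i = sSup (A i) := by simp only [hahatdef]
            rw [this]; exact h2
          have h4 : ((ahat i : ℝ):Rmax) + x i ≤ Sst.sup (fun j => bhat j + x j) := by
            rw [← hs, ← hxi', ← WithBot.coe_add, WithBot.coe_le_coe]
            linarith
          exact absurd h4 (not_le_of_gt hcon)
        obtain ⟨Kc, hKcD, hKclt⟩ := hKc
        set R : ℝ := ef Kc i + xi with hRdef
        have hKclt' : Sst.sup (fun j => bhat j + x j) < ((R : ℝ):Rmax) := by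
          have hReq : ((R : ℝ):Rmax) = ((ef Kc i : Rmax)) + x i := by
            rw [hRdef, WithBot.coe_add, hxi']
          rw [hReq]
          exact hKclt
        have hQ : ∀ j ∈ Sst, ∃ Kj ∈ D, (x j = ⊥ ∨ ∃ xjr : ℝ, x j = (xjr : Rmax) ∧
            ahat i₀ + (ef Kj j - ef Kj i₀) + xjr < R) := by
          intro j hj
          have hterm : bhat j + x j < ((R : ℝ) : Rmax) :=
            lt_of_le_of_lt (Finset.le_sup (f := fun j => bhat j + x j) hj) hKclt'
          rcases eq_or_ne (x j) ⊥ with hxj | hxj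
          · exact ⟨K₀D, hK₀D, Or.inl hxj⟩
          obtain ⟨xjr, hxjr⟩ := WithBot.ne_bot_iff_exists.1 hxj
          by_cases hbb : BddBelow (G j)
          · have hbeqj : bhat j = ((ahat i₀ + sInf (G j) : ℝ):Rmax) := by
              simp only [hbhatdef]; rw [if_pos hbb]
            rw [hbeqj, ← hxjr, ← WithBot.coe_add, WithBot.coe_lt_coe] at hterm
            have hlt : sInf (G j) < R - ahat i₀ - xjr := by linarith
            obtain ⟨g, hgG, hglt⟩ := (csInf_lt_iff hbb (hGne j)).1 hlt
            obtain ⟨Kg, hKg, hKg'⟩ := hgG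
            exact ⟨Kg, hKg, Or.inr ⟨xjr, hxjr.symm, by rw [hKg']; linarith⟩⟩
          · have hex : ∃ g ∈ G j, g < R - ahat i₀ - xjr := by
              by_contra hcg
              push_neg at hcg
              exact hbb ⟨R - ahat i₀ - xjr, fun g hg => hcg g hg⟩
            obtain ⟨g, hgG, hglt⟩ := hex
            obtain ⟨Kg, hKg, hKg'⟩ := hgG
            exact ⟨Kg, hKg, Or.inr ⟨xjr, hxjr.symm, by rw [hKg']; linarith⟩⟩
        choose! Kj hKjD hKjQ using hQ
        set F2 : Finset (Set (Fin n → Rmax)) := insert Kc (Sst.image Kj) with hF2def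
        have hF2c : ∀ K ∈ F2, K ∈ c := by
          intro K hK
          rcases Finset.mem_insert.1 hK with h | h
          · rw [h]; exact hDc Kc hKcD
          · obtain ⟨j, hj, h'⟩ := Finset.mem_image.1 h
            rw [← h']; exact hDc _ (hKjD j hj)
        obtain ⟨K2', hK2'mem, -, hK2'all⟩ :=
          chain_min hchain F2 hF2c ⟨Kc, Finset.mem_insert_self _ _⟩
        have hK2'D : K2' ∈ D := by
          rcases Finset.mem_insert.1 hK2'mem with h | h
          · rw [h]; exact hKcD
          · obtain ⟨j, hj, h'⟩ := Finset.mem_image.1 h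
            rw [← h']; exact hKjD j hj
        have hsubKc : K2' ⊆ Kc := hK2'all Kc (Finset.mem_insert_self _ _)
        have hlow : ((R : ℝ):Rmax) ≤ Tst.sup (fun k => ((ef K2' k : Rmax)) + x k) := by
          have h5 : ef Kc i ≤ ef K2' i := hmonoT Kc hKcD K2' hK2'D hsubKc i hi
          calc ((R : ℝ):Rmax) = ((ef Kc i : Rmax)) + ((xi : ℝ):Rmax) := by
                rw [hRdef, WithBot.coe_add]
            _ ≤ ((ef K2' i : Rmax)) + ((xi : ℝ):Rmax) :=
                add_le_add_left (WithBot.coe_le_coe.2 h5) _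
            _ = ((ef K2' i : Rmax)) + x i := by rw [hxi']
            _ ≤ _ := Finset.le_sup (f := fun k => ((ef K2' k : Rmax)) + x k) hi
        have hup : Sst.sup (fun j => ((ef K2' j : Rmax)) + x j) < ((R : ℝ):Rmax) := by
          rw [Finset.sup_lt_iff (WithBot.bot_lt_coe R)]
          intro j hj
          rcases hKjQ j hj with hxj | ⟨xjr, hxjr, hlt⟩
          · rw [hxj, WithBot.add_bot]; exact WithBot.bot_lt_coe _
          · have h6 : ef K2' i₀ ≤ ahat i₀ := hle_ahat K2' hK2'D i₀ hi₀
            have hsubKj : K2' ⊆ Kj j :=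
              hK2'all _ (Finset.mem_insert_of_mem (Finset.mem_image_of_mem _ hj))
            have h7 : ef K2' j - ef K2' i₀ ≤ ef (Kj j) j - ef (Kj j) i₀ :=
              hGmono (Kj j) (hKjD j hj) K2' hK2'D hsubKj j hj
            have h8 : ef K2' j + xjr < R := by linarith
            rw [hxjr, ← WithBot.coe_add]
            exact WithBot.coe_lt_coe.2 h8
        have hxK2' := hVmem K2' hK2'D x hxV
        exact absurd ((hlow.trans hxK2').trans_lt hup) (lt_irrefl _)
      have hKstarsub : ∀ K ∈ c, Kstar ⊆ K := by
        intro K hK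
        obtain ⟨K', hK', hsub'⟩ := hDcoini K hK
        exact (hbeta K' hK').trans hsub'
      exact ⟨Kstar, ⟨hKstarHS, halpha, (hKstarsub K₂ hK₂c).trans (hcP hK₂c).2.2⟩, hKstarsub⟩
    obtain ⟨M, hM⟩ := zorn_superset P hzorn
    refine ⟨M, hM.1.1, hM.1.2.1, hM.1.2.2, ?_⟩
    rintro ⟨K'', hs'', hV'', hss⟩
    have hK''P : K'' ∈ P := ⟨hs'', hV'', hss.subset.trans hM.1.2.2⟩
    exact hss.not_subset (hM.2 hK''P hss.subset)
end
end

section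
/- Let V ⊆ ℝ_max^n be a finitely generated max-plus cone with full support. Then V is the intersection of finitely many half-spaces each of which is minimal with respect to V. -/
noncomputable section

namespace Stmt8

variable {n : ℕ}

lemma exists_real {a : Rmax} (h : a ≠ ⊥) : ∃ r : ℝ, a = (r : Rmax) := by
  rcases WithBot.ne_bot_iff_exists.mp h with ⟨r, hr⟩; exact ⟨r, hr.symm⟩

lemma coe_unbot {a : Rmax} (h : a ≠ ⊥) : (((a.unbotD 0 : ℝ)) : Rmax) = a := by
  obtain ⟨r, rfl⟩ := exists_real h
  simp [WithBot.unbotD_coe]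

lemma add_cancel {a b : Rmax} {x : Rmax} (hx : x ≠ ⊥) (h : a + x = b + x) : a = b :=
  WithBot.add_right_cancel hx h

lemma sup_ite_mem (S : Finset (Fin n)) (a : Fin n → Rmax) (x : Fin n → Rmax) :
    Finset.univ.sup (fun k => (if k ∈ S then a k else ⊥) + x k)
      = S.sup (fun k => a k + x k) := by
  apply le_antisymm
  · refine Finset.sup_le fun k _ => ?_
    by_cases hk : k ∈ S
    · rw [if_pos hk]; exact Finset.le_sup (f := fun k => a k + x k) hk
    · rw [if_neg hk, WithBot.bot_add]; exact bot_le
  · refine Finset.sup_le fun k hk => ?_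
    have h1 : (if k ∈ S then a k else ⊥) + x k = a k + x k := by rw [if_pos hk]
    exact h1 ▸ Finset.le_sup (f := fun k => (if k ∈ S then a k else ⊥) + x k) (Finset.mem_univ k)

lemma isHalfSpace_halfSpace (I J : Finset (Fin n)) (a : Fin n → ℝ) :
    IsHalfSpace (halfSpace I J a) := by
  refine ⟨fun k => if k ∈ I then (a k : Rmax) else ⊥,
          fun k => if k ∈ J then (a k : Rmax) else ⊥, ?_⟩
  ext x
  show _ ↔ _
  rw [Set.mem_setOf_eq, sup_ite_mem, sup_ite_mem]
  exact Iff.rfl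

lemma isHalfSpace_univ : IsHalfSpace (Set.univ : Set (Fin n → Rmax)) := by
  refine ⟨fun _ => ⊥, fun _ => ⊥, ?_⟩
  ext x
  simp [WithBot.bot_add]

lemma exists_normalForm {H : Set (Fin n → Rmax)} (h : IsHalfSpace H) :
    ∃ (I J : Finset (Fin n)) (a : Fin n → ℝ), Disjoint I J ∧ H = halfSpace I J a := by
  classical
  obtain ⟨α, β, rfl⟩ := h
  set c : Fin n → Rmax := fun k => α k ⊔ β k with hc
  refine ⟨Finset.univ.filter (fun k => c k ≠ ⊥ ∧ ¬ β k = c k),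
          Finset.univ.filter (fun k => β k = c k ∧ c k ≠ ⊥),
          fun k => (c k).unbotD 0, ?_, ?_⟩
  · rw [Finset.disjoint_left]
    intro k hk1 hk2
    simp only [Finset.mem_filter] at hk1 hk2
    exact hk1.2.2 hk2.2.1
  · ext x
    simp only [Set.mem_setOf_eq, halfSpace]
    set I := Finset.univ.filter (fun k => c k ≠ ⊥ ∧ ¬ β k = c k) with hI
    set J := Finset.univ.filter (fun k => β k = c k ∧ c k ≠ ⊥) with hJ
    set Lα := Finset.univ.sup (fun i => α i + x i) with hLα
    set Lβ := Finset.univ.sup (fun i => β i + x i) with hLβ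
    set LI := I.sup (fun i => ((((c i).unbotD 0 : ℝ)) : Rmax) + x i) with hLI
    set LJ := J.sup (fun j => ((((c j).unbotD 0 : ℝ)) : Rmax) + x j) with hLJ
    have hsupc : Finset.univ.sup (fun k => c k + x k) = Lα ⊔ Lβ := by
      have h1 : (fun k => c k + x k) = fun k => (α k + x k) ⊔ (β k + x k) := by
        funext k
        exact Monotone.map_max (fun u v h => add_le_add_left h (x k))
      rw [h1, hLα, hLβ, ← Finset.sup_sup]
      rfl
    have hsupc2 : Finset.univ.sup (fun k => c k + x k) = LI ⊔ LJ := by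
      apply le_antisymm
      · refine Finset.sup_le fun k _ => ?_
        by_cases hb : c k = ⊥
        · rw [hb, WithBot.bot_add]; exact bot_le
        · by_cases hβ : β k = c k
          · have hk : k ∈ J := by simp [hJ, hβ, hb]
            have h2 : ((((c k).unbotD 0 : ℝ)) : Rmax) + x k = c k + x k := by rw [coe_unbot hb]
            exact le_sup_of_le_right (h2 ▸ Finset.le_sup
              (f := fun j => ((((c j).unbotD 0 : ℝ)) : Rmax) + x j) hk)
          · have hk : k ∈ I := by simp [hI, hβ, hb]
            have h2 : ((((c k).unbotD 0 : ℝ)) : Rmax) + x k = c k + x k := by rw [coe_unbot hb]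
            exact le_sup_of_le_left (h2 ▸ Finset.le_sup
              (f := fun i => ((((c i).unbotD 0 : ℝ)) : Rmax) + x i) hk)
      · refine sup_le ?_ ?_
        · refine Finset.sup_le fun k hk => ?_
          have hb : c k ≠ ⊥ := (Finset.mem_filter.mp hk).2.1
          rw [coe_unbot hb]
          exact Finset.le_sup (f := fun k => c k + x k) (Finset.mem_univ k)
        · refine Finset.sup_le fun k hk => ?_
          have hb : c k ≠ ⊥ := (Finset.mem_filter.mp hk).2.2
          rw [coe_unbot hb]
          exact Finset.le_sup (f := fun k => c k + x k) (Finset.mem_univ k)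
    have hJβ : LJ ≤ Lβ := by
      refine Finset.sup_le fun j hj => ?_
      obtain ⟨hβ, hb⟩ := (Finset.mem_filter.mp hj).2
      rw [coe_unbot hb, ← hβ]
      exact Finset.le_sup (f := fun j => β j + x j) (Finset.mem_univ j)
    constructor
    · intro hab
      have hβc : LI ⊔ LJ = Lβ := by rw [← hsupc2, hsupc]; exact sup_eq_right.mpr hab
      by_cases hbot : Lβ = ⊥
      · have h5 : LI ≤ ⊥ := by
          calc LI ≤ LI ⊔ LJ := le_sup_left
          _ = Lβ := hβc
          _ = ⊥ := hbot
        exact h5.trans bot_le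
      · rcases Finset.eq_empty_or_nonempty (Finset.univ : Finset (Fin n)) with he | hne
        · exfalso; apply hbot; rw [hLβ, he]; rfl
        obtain ⟨j, _, hjval⟩ := Finset.exists_mem_eq_sup Finset.univ hne (fun j => β j + x j)
        rw [← hLβ] at hjval
        have hβj : β j + x j ≠ ⊥ := by rw [← hjval]; exact hbot
        have hβjb : β j ≠ ⊥ := fun hb => hβj (by rw [hb, WithBot.bot_add])
        have hxjb : x j ≠ ⊥ := fun hb => hβj (by rw [hb, WithBot.add_bot])
        have h2 : c j + x j ≤ Lβ := by
          calc c j + x j ≤ Finset.univ.sup (fun k => c k + x k) :=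
                Finset.le_sup (f := fun k => c k + x k) (Finset.mem_univ j)
          _ = Lα ⊔ Lβ := hsupc
          _ = Lβ := sup_eq_right.mpr hab
        have h3 : β j + x j ≤ c j + x j := add_le_add_left le_sup_right (x j)
        have h4 : c j + x j = β j + x j := le_antisymm (hjval ▸ h2) h3
        have hcβ : β j = c j := (add_cancel hxjb h4).symm
        have hcb : c j ≠ ⊥ := by rw [← hcβ]; exact hβjb
        have hjJ : j ∈ J := by simp [hJ, hcβ, hcb]
        calc LI ≤ LI ⊔ LJ := le_sup_left
        _ = Lβ := hβc
        _ = β j + x j := hjval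
        _ = ((((c j).unbotD 0 : ℝ)) : Rmax) + x j := by rw [coe_unbot hcb, ← hcβ]
        _ ≤ LJ := Finset.le_sup (f := fun j => ((((c j).unbotD 0 : ℝ)) : Rmax) + x j) hjJ
    · intro hIJ
      have h1 : Lα ≤ LI ⊔ LJ := by
        rw [← hsupc2]
        refine Finset.sup_le fun k _ => ?_
        exact le_trans (add_le_add_left le_sup_left (x k))
          (Finset.le_sup (f := fun k => c k + x k) (Finset.mem_univ k))
      calc Lα ≤ LI ⊔ LJ := h1
      _ = LJ := sup_eq_right.mpr hIJ
      _ ≤ Lβ := hJβ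


lemma mem_halfSpace_pair {I J : Finset (Fin n)} (hd : Disjoint I J) {i j : Fin n}
    (hi : i ∈ I) (hj : j ∈ J) (a b : Fin n → ℝ) :
    ((fun k => if k = i then ((b i : ℝ) : Rmax) else if k = j then ((b j : ℝ) : Rmax) else ⊥)
      ∈ halfSpace I J a) ↔ a i + b i ≤ a j + b j := by
  classical
  have hij : i ≠ j := fun h => (Finset.disjoint_left.mp hd hi (h ▸ hj))
  unfold halfSpace
  rw [Set.mem_setOf_eq]
  have hL : I.sup (fun i' => ((a i' : Rmax)) +
      (if i' = i then ((b i : ℝ) : Rmax) else if i' = j then ((b j : ℝ) : Rmax) else ⊥))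
      = ((a i + b i : ℝ) : Rmax) := by
    apply le_antisymm
    · refine Finset.sup_le fun i' hi' => ?_
      by_cases h1 : i' = i
      · subst h1; rw [if_pos rfl]; push_cast; exact le_refl _
      · have h2 : i' ≠ j := fun h => (Finset.disjoint_left.mp hd hi' (h ▸ hj))
        rw [if_neg h1, if_neg h2, WithBot.add_bot]; exact bot_le
    · have h1 : ((a i : Rmax)) + (if i = i then ((b i : ℝ) : Rmax)
          else if i = j then ((b j : ℝ) : Rmax) else ⊥) = ((a i + b i : ℝ) : Rmax) := by
        rw [if_pos rfl]; push_cast; rfl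
      exact h1 ▸ Finset.le_sup (f := fun i' => ((a i' : Rmax)) +
        (if i' = i then ((b i : ℝ) : Rmax) else if i' = j then ((b j : ℝ) : Rmax) else ⊥)) hi
  have hR : J.sup (fun j' => ((a j' : Rmax)) +
      (if j' = i then ((b i : ℝ) : Rmax) else if j' = j then ((b j : ℝ) : Rmax) else ⊥))
      = ((a j + b j : ℝ) : Rmax) := by
    apply le_antisymm
    · refine Finset.sup_le fun j' hj' => ?_
      have h1 : j' ≠ i := fun h => (Finset.disjoint_right.mp hd hj' (h ▸ hi))
      by_cases h2 : j' = j
      · subst h2; rw [if_neg h1, if_pos rfl]; push_cast; exact le_refl _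
      · rw [if_neg h1, if_neg h2, WithBot.add_bot]; exact bot_le
    · have h1 : ((a j : Rmax)) + (if j = i then ((b i : ℝ) : Rmax)
          else if j = j then ((b j : ℝ) : Rmax) else ⊥) = ((a j + b j : ℝ) : Rmax) := by
        rw [if_neg (Ne.symm hij), if_pos rfl]; push_cast; rfl
      exact h1 ▸ Finset.le_sup (f := fun j' => ((a j' : Rmax)) +
        (if j' = i then ((b i : ℝ) : Rmax) else if j' = j then ((b j : ℝ) : Rmax) else ⊥)) hj
  rw [hL, hR, WithBot.coe_le_coe]

lemma dd_mono {I J : Finset (Fin n)} (hd : Disjoint I J) {a a' : Fin n → ℝ}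
    (hsub : halfSpace I J a' ⊆ halfSpace I J a) {i j : Fin n} (hi : i ∈ I) (hj : j ∈ J) :
    a i - a j ≤ a' i - a' j := by
  have h1 := (mem_halfSpace_pair hd hi hj a' (fun k => -a' k)).mpr (by simp)
  have h2 := (mem_halfSpace_pair hd hi hj a (fun k => -a' k)).mp (hsub h1)
  linarith

lemma sat_halfSpace {I J : Finset (Fin n)} {a : Fin n → ℝ} {v : Fin n → Rmax}
    (hv : v ∈ halfSpace I J a) {i : Fin n} (hi : i ∈ I) {vi : ℝ} (hvi : v i = (vi : Rmax)) :
    ∃ j ∈ J, ∃ vj : ℝ, v j = (vj : Rmax) ∧ a i + vi ≤ a j + vj := by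
  have h1 : (((a i + vi : ℝ)) : Rmax) ≤ J.sup (fun j => ((a j : Rmax)) + v j) := by
    calc (((a i + vi : ℝ)) : Rmax) = ((a i : Rmax)) + v i := by rw [hvi]; push_cast; rfl
    _ ≤ I.sup (fun i' => ((a i' : Rmax)) + v i') :=
        Finset.le_sup (f := fun i' => ((a i' : Rmax)) + v i') hi
    _ ≤ _ := hv
  obtain ⟨j, hj, hj2⟩ := (Finset.le_sup_iff (WithBot.bot_lt_coe _)).mp h1
  have hvj : v j ≠ ⊥ := by
    intro hb
    rw [hb, WithBot.add_bot] at hj2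
    exact absurd hj2 (by simp)
  obtain ⟨vj, hvj'⟩ := exists_real hvj
  refine ⟨j, hj, vj, hvj', ?_⟩
  rw [hvj'] at hj2
  exact_mod_cast hj2

lemma chain_finset_min {β : Type} {C : Set (Set (Fin n → Rmax))}
    (hC : IsChain (· ⊆ ·) C) (s : Finset β) (hs : s.Nonempty)
    (f : β → Set (Fin n → Rmax)) (hf : ∀ b ∈ s, f b ∈ C) :
    ∃ b ∈ s, ∀ b' ∈ s, f b ⊆ f b' := by
  classical
  suffices h : ∀ s : Finset β, (∀ b ∈ s, f b ∈ C) → s.Nonempty → ∃ b ∈ s, ∀ b' ∈ s, f b ⊆ f b' by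
    exact h s hf hs
  intro s
  induction s using Finset.induction_on with
  | empty =>
    intro _ hs'; exact absurd hs' (by simp)
  | @insert a s ha ih =>
    intro hf' _
    by_cases hse : s.Nonempty
    · obtain ⟨b, hb, hmin⟩ := ih (fun b hb => hf' b (Finset.mem_insert_of_mem hb)) hse
      rcases hC.total (hf' a (Finset.mem_insert_self a s)) (hf' b (Finset.mem_insert_of_mem hb))
        with h | h
      · refine ⟨a, Finset.mem_insert_self a s, fun b' hb' => ?_⟩
        rcases Finset.mem_insert.mp hb' with rfl | hb'
        · exact subset_rfl
        · exact h.trans (hmin b' hb')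
      · refine ⟨b, Finset.mem_insert_of_mem hb, fun b' hb' => ?_⟩
        rcases Finset.mem_insert.mp hb' with rfl | hb'
        · exact h
        · exact hmin b' hb'
    · rw [Finset.not_nonempty_iff_eq_empty] at hse
      subst hse
      exact ⟨a, Finset.mem_insert_self a ∅, fun b' hb' => by
        rcases Finset.mem_insert.mp hb' with rfl | hb'
        · exact subset_rfl
        · exact absurd hb' (by simp)⟩


lemma chain_lb {V : Set (Fin n → Rmax)} (hsupp : HasFullSupport V)
    {C : Set (Set (Fin n → Rmax))} (hC : IsChain (· ⊆ ·) C) (hne : C.Nonempty)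
    (hhs : ∀ H ∈ C, IsHalfSpace H) (hVC : ∀ H ∈ C, V ⊆ H) :
    ∃ K, IsHalfSpace K ∧ V ⊆ K ∧ ∀ H ∈ C, K ⊆ H := by
  classical
  have hnf : ∀ H ∈ C, ∃ q : Finset (Fin n) × Finset (Fin n) × (Fin n → ℝ),
      Disjoint q.1 q.2.1 ∧ H = halfSpace q.1 q.2.1 q.2.2 := by
    intro H hH
    obtain ⟨I, J, a, h1, h2⟩ := exists_normalForm (hhs H hH)
    exact ⟨⟨I, J, a⟩, h1, h2⟩
  choose! nf hnfd hnfe using hnf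
  set sh : Set (Fin n → Rmax) → Finset (Fin n) × Finset (Fin n) :=
    fun H => ((nf H).1, (nf H).2.1) with hsh
  have hcoin : ∃ σ : Finset (Fin n) × Finset (Fin n),
      ∀ H ∈ C, ∃ H' ∈ C, H' ⊆ H ∧ sh H' = σ := by
    by_contra hcon
    push_neg at hcon
    choose g hg1 hg2 using hcon
    obtain ⟨σ0, _, hmin⟩ := chain_finset_min hC Finset.univ Finset.univ_nonempty g
      (fun σ _ => hg1 σ)
    exact hg2 (sh (g σ0)) (g σ0) (hg1 σ0) (hmin (sh (g σ0)) (Finset.mem_univ _)) rfl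
  obtain ⟨⟨I, J⟩, hcoin⟩ := hcoin
  obtain ⟨Hb, hHbC⟩ := hne
  obtain ⟨H₀, hH₀C, hH₀b, hH₀sh⟩ := hcoin Hb hHbC
  set T : Set (Set (Fin n → Rmax)) := {H | H ∈ C ∧ sh H = (I, J) ∧ H ⊆ H₀} with hT
  have hT0 : H₀ ∈ T := ⟨hH₀C, hH₀sh, subset_rfl⟩
  have hTC : ∀ H ∈ T, H ∈ C := fun H h => h.1
  set aa : Set (Fin n → Rmax) → Fin n → ℝ := fun H => (nf H).2.2 with haa
  have hTsh : ∀ H ∈ T, H = halfSpace I J (aa H) := by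
    intro H hH
    have h2 := hnfe H hH.1
    have h3' : (nf H).1 = I := (Prod.ext_iff.mp hH.2.1).1
    have h4 : (nf H).2.1 = J := (Prod.ext_iff.mp hH.2.1).2
    conv_lhs => rw [h2, h3', h4]
  have hdisj : Disjoint I J := by
    have h1 := hnfd H₀ hH₀C
    have h3 : (nf H₀).1 = I := (Prod.ext_iff.mp hH₀sh).1
    have h4 : (nf H₀).2.1 = J := (Prod.ext_iff.mp hH₀sh).2
    rw [h3, h4] at h1; exact h1
  have hcoin' : ∀ H ∈ C, ∃ H' ∈ T, H' ⊆ H := by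
    intro H hH
    rcases hC.total hH hH₀C with h | h
    · obtain ⟨H', h1, h2, h3⟩ := hcoin H hH
      exact ⟨H', ⟨h1, h3, h2.trans h⟩, h2⟩
    · obtain ⟨H', h1, h2, h3⟩ := hcoin H₀ hH₀C
      exact ⟨H', ⟨h1, h3, h2⟩, h2.trans h⟩
  set dd : Set (Fin n → Rmax) → Fin n → Fin n → ℝ := fun H i j => aa H i - aa H j with hdd
  clear_value dd
  have hmono : ∀ H ∈ T, ∀ H' ∈ T, H' ⊆ H → ∀ i ∈ I, ∀ j ∈ J, dd H i j ≤ dd H' i j := by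
    intro H hH H' hH' hsub i hi j hj
    simp only [hdd]
    exact dd_mono hdisj (by rw [← hTsh H hH, ← hTsh H' hH']; exact hsub) hi hj
  have hmin2 : ∀ H ∈ T, ∀ H' ∈ T, ∃ H'' ∈ T, H'' ⊆ H ∧ H'' ⊆ H' := by
    intro H hH H' hH'
    rcases hC.total (hTC H hH) (hTC H' hH') with h | h
    exacts [⟨H, hH, subset_rfl, h⟩, ⟨H', hH', h, subset_rfl⟩]
  have hsat : ∀ i ∈ I, ∃ ξ : Fin n → ℝ, ∀ H ∈ T, ∃ j ∈ J, dd H i j ≤ ξ j := by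
    intro i hi
    obtain ⟨v, hvV, hvi⟩ := hsupp i
    obtain ⟨vi, hvi'⟩ := exists_real hvi
    refine ⟨fun j => (v j).unbotD 0 - vi, ?_⟩
    intro H hH
    have hvH : v ∈ halfSpace I J (aa H) := by
      rw [← hTsh H hH]; exact hVC H (hTC H hH) hvV
    obtain ⟨j, hj, vj, hvj, hineq⟩ := sat_halfSpace hvH hi hvi'
    refine ⟨j, hj, ?_⟩
    show dd H i j ≤ (v j).unbotD 0 - vi
    rw [hvj, WithBot.unbotD_coe]
    simp only [hdd]
    linarith
  set SS : Fin n → Fin n → Set ℝ := fun i j => {r : ℝ | ∃ H ∈ T, r = dd H i j} with hSS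
  set Bdd : Fin n → Fin n → Prop := fun i j => BddAbove (SS i j) with hBdd
  have hSSne : ∀ i j, (SS i j).Nonempty := fun i j => ⟨dd H₀ i j, H₀, hT0, rfl⟩
  have hc : ∀ i ∈ I, ∃ j ∈ J, Bdd i j := by
    intro i hi
    by_contra hcon
    push_neg at hcon
    obtain ⟨ξ, hξ⟩ := hsat i hi
    have hpick : ∀ j : Fin n, ∃ Hj, Hj ∈ T ∧ (j ∈ J → ξ j < dd Hj i j) := by
      intro j
      by_cases hj : j ∈ J
      · have h1 : ¬ Bdd i j := hcon j hj
        rw [hBdd, not_bddAbove_iff] at h1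
        obtain ⟨r, ⟨H', hH', rfl⟩, hr⟩ := h1 (ξ j)
        exact ⟨H', hH', fun _ => hr⟩
      · exact ⟨H₀, hT0, fun h => absurd h hj⟩
    choose g hg1 hg2 using hpick
    obtain ⟨j0', hj0', _⟩ := hξ H₀ hT0
    obtain ⟨j1, hj1, hminj⟩ := chain_finset_min hC J ⟨j0', hj0'⟩ g
      (fun j _ => hTC _ (hg1 j))
    obtain ⟨j2, hj2, hle⟩ := hξ (g j1) (hg1 j1)
    have h2 := hmono (g j2) (hg1 j2) (g j1) (hg1 j1) (hminj j2 hj2) i hi j2 hj2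
    have h3 := hg2 j2 hj2
    linarith
  have hd : ∀ i ∈ I, ∀ i' ∈ I, ∀ j ∈ J, Bdd i j → Bdd i' j := by
    intro i hi i' hi' j hj hBij
    obtain ⟨M, hM⟩ := hBij
    obtain ⟨j0, hj0, hB0⟩ := hc i' hi'
    obtain ⟨M0, hM0⟩ := hB0
    refine ⟨M0 + M - dd H₀ i j0, ?_⟩
    rintro r ⟨H, hH, rfl⟩
    have h1 : dd H i' j0 ≤ M0 := hM0 ⟨H, hH, rfl⟩
    have h2 : dd H i j ≤ M := hM ⟨H, hH, rfl⟩
    have h3 : dd H₀ i j0 ≤ dd H i j0 := hmono H₀ hT0 H hH hH.2.2 i hi j0 hj0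
    have e : dd H i' j = dd H i' j0 + dd H i j - dd H i j0 := by simp only [hdd]; ring
    rw [e]; linarith
  by_cases hIne : I.Nonempty
  swap
  · rw [Finset.not_nonempty_iff_eq_empty] at hIne
    have huniv : ∀ H ∈ T, H = Set.univ := by
      intro H hH
      rw [hTsh H hH, hIne]
      ext x; simp [halfSpace]
    refine ⟨Set.univ, isHalfSpace_univ, Set.subset_univ V, ?_⟩
    intro H hH
    obtain ⟨H', hH', hsub⟩ := hcoin' H hH
    rw [← huniv H' hH']
    exact hsub
  obtain ⟨i₀, hi₀⟩ := hIne
  obtain ⟨j₀, hj₀J, hj₀B⟩ := hc i₀ hi₀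
  set D : Fin n → Fin n → ℝ := fun i j => sSup (SS i j) with hD
  clear_value D
  set J₁ : Finset (Fin n) := J.filter (fun j => Bdd i₀ j) with hJ₁
  have hj₀1 : j₀ ∈ J₁ := Finset.mem_filter.mpr ⟨hj₀J, hj₀B⟩
  have hJ₁J : ∀ j ∈ J₁, j ∈ J := fun j hj => (Finset.mem_filter.mp hj).1
  have hBdd1 : ∀ i ∈ I, ∀ j ∈ J₁, Bdd i j :=
    fun i hi j hj => hd i₀ hi₀ i hi j (hJ₁J j hj) (Finset.mem_filter.mp hj).2
  have hDle : ∀ i ∈ I, ∀ j ∈ J₁, ∀ H ∈ T, dd H i j ≤ D i j := by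
    intro i hi j hj H hH
    simp only [hD]
    exact le_csSup (hBdd1 i hi j hj) ⟨H, hH, rfl⟩
  have hDlt : ∀ i j : Fin n, ∀ y : ℝ, y < D i j → ∃ H ∈ T, y < dd H i j := by
    intro i j y hy
    simp only [hD] at hy
    obtain ⟨r, ⟨H, hH, rfl⟩, hr⟩ := exists_lt_of_lt_csSup (hSSne i j) hy
    exact ⟨H, hH, hr⟩
  have hrank : ∀ i ∈ I, ∀ j ∈ J₁, D i j = D i j₀ + D i₀ j - D i₀ j₀ := by
    intro i hi j hj
    apply le_antisymm
    · refine le_of_forall_pos_le_add ?_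
      intro ε hε
      rw [show D i j = sSup (SS i j) from by simp only [hD]]
      refine csSup_le (hSSne i j) ?_
      rintro r ⟨H, hH, rfl⟩
      obtain ⟨H1, hH1, hH1gt⟩ := hDlt i₀ j₀ (D i₀ j₀ - ε) (by linarith)
      obtain ⟨H2, hH2, h2H, h2H1⟩ := hmin2 H hH H1 hH1
      have e : dd H2 i j = dd H2 i j₀ + dd H2 i₀ j - dd H2 i₀ j₀ := by
        simp only [hdd]; ring
      have h1 : dd H i j ≤ dd H2 i j := hmono H hH H2 hH2 h2H i hi j (hJ₁J j hj)
      have h2 : dd H2 i j₀ ≤ D i j₀ := hDle i hi j₀ hj₀1 H2 hH2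
      have h3 : dd H2 i₀ j ≤ D i₀ j := hDle i₀ hi₀ j hj H2 hH2
      have h4 : dd H1 i₀ j₀ ≤ dd H2 i₀ j₀ := hmono H1 hH1 H2 hH2 h2H1 i₀ hi₀ j₀ hj₀J
      linarith
    · have key : ∀ ε : ℝ, 0 < ε → D i j₀ + D i₀ j - D i₀ j₀ ≤ D i j + ε := by
        intro ε hε
        obtain ⟨H1, hH1, h1⟩ := hDlt i j₀ (D i j₀ - ε/2) (by linarith)
        obtain ⟨H2, hH2, h2⟩ := hDlt i₀ j (D i₀ j - ε/2) (by linarith)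
        obtain ⟨H3, hH3, h3H1, h3H2⟩ := hmin2 H1 hH1 H2 hH2
        have e : dd H3 i j₀ + dd H3 i₀ j = dd H3 i j + dd H3 i₀ j₀ := by
          simp only [hdd]; ring
        have h3 : dd H1 i j₀ ≤ dd H3 i j₀ := hmono H1 hH1 H3 hH3 h3H1 i hi j₀ hj₀J
        have h4 : dd H2 i₀ j ≤ dd H3 i₀ j := hmono H2 hH2 H3 hH3 h3H2 i₀ hi₀ j (hJ₁J j hj)
        have h5 : dd H3 i₀ j₀ ≤ D i₀ j₀ := hDle i₀ hi₀ j₀ hj₀1 H3 hH3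
        have h6 : dd H3 i j ≤ D i j := hDle i hi j hj H3 hH3
        linarith [e, h1, h2, h3, h4, h5, h6]
      refine le_of_forall_pos_le_add ?_
      exact key
  set A : Fin n → ℝ := fun i => D i j₀ with hA
  set B : Fin n → ℝ := fun j => D i₀ j₀ - D i₀ j with hB
  have hAB : ∀ i ∈ I, ∀ j ∈ J₁, A i - B j = D i j := by
    intro i hi j hj
    have := hrank i hi j hj
    simp only [hA, hB]
    linarith
  set cv : Fin n → ℝ := fun k => if k ∈ I then A k else B k with hcv
  have hcvI : ∀ i ∈ I, cv i = A i := fun i hi => by simp only [hcv, if_pos hi]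
  have hcvJ : ∀ j ∈ J₁, cv j = B j := by
    intro j hj
    have : j ∉ I := Finset.disjoint_right.mp hdisj (hJ₁J j hj)
    simp only [hcv, if_neg this]
  -- direction 1 : halfSpace I J₁ cv ⊆ every member of T
  have hdir1 : ∀ H ∈ T, halfSpace I J₁ cv ⊆ H := by
    intro H hH x hx
    rw [hTsh H hH]
    simp only [halfSpace, Set.mem_setOf_eq] at hx ⊢
    refine Finset.sup_le fun i hi => ?_
    by_cases hxi : x i = ⊥
    · rw [hxi, WithBot.add_bot]; exact bot_le
    obtain ⟨xi, hxi'⟩ := exists_real hxi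
    have h1 : (((cv i + xi : ℝ)) : Rmax) ≤ J₁.sup (fun j => ((cv j : Rmax)) + x j) := by
      calc (((cv i + xi : ℝ)) : Rmax) = ((cv i : Rmax)) + x i := by rw [hxi']; push_cast; rfl
      _ ≤ I.sup (fun i' => ((cv i' : Rmax)) + x i') :=
          Finset.le_sup (f := fun i' => ((cv i' : Rmax)) + x i') hi
      _ ≤ _ := hx
    obtain ⟨j, hj, hj2⟩ := (Finset.le_sup_iff (WithBot.bot_lt_coe _)).mp h1
    have hxj : x j ≠ ⊥ := by
      intro hb
      rw [hb, WithBot.add_bot] at hj2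
      exact absurd hj2 (by simp)
    obtain ⟨xj, hxj'⟩ := exists_real hxj
    rw [hxj'] at hj2
    have h2 : cv i + xi ≤ cv j + xj := by exact_mod_cast hj2
    have h3 : dd H i j ≤ D i j := hDle i hi j hj H hH
    have h4 : A i - B j = D i j := hAB i hi j hj
    rw [hcvI i hi] at h2
    rw [hcvJ j hj] at h2
    have h5 : aa H i + xi ≤ aa H j + xj := by
      simp only [hdd] at h3
      linarith
    calc ((aa H i : Rmax)) + x i = (((aa H i + xi : ℝ)) : Rmax) := by rw [hxi']; push_cast; rfl
    _ ≤ (((aa H j + xj : ℝ)) : Rmax) := by exact_mod_cast h5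
    _ = ((aa H j : Rmax)) + x j := by rw [hxj']; push_cast; rfl
    _ ≤ J.sup (fun j' => ((aa H j' : Rmax)) + x j') :=
        Finset.le_sup (f := fun j' => ((aa H j' : Rmax)) + x j') (hJ₁J j hj)
  -- direction 2 : anything in all members of T lies in halfSpace I J₁ cv
  have hdir2 : ∀ x : Fin n → Rmax, (∀ H ∈ T, x ∈ H) → x ∈ halfSpace I J₁ cv := by
    intro x hx
    simp only [halfSpace, Set.mem_setOf_eq]
    refine Finset.sup_le fun i hi => ?_
    by_cases hxi : x i = ⊥
    · rw [hxi, WithBot.add_bot]; exact bot_le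
    obtain ⟨xi, hxi'⟩ := exists_real hxi
    by_contra hcon
    have hpick : ∀ j : Fin n, ∃ Hj, Hj ∈ T ∧
        (∀ xj : ℝ, x j = (xj : Rmax) → j ∈ J → xj - xi < dd Hj i j) := by
      intro j
      by_cases hj1 : j ∈ J ∧ x j ≠ ⊥
      · obtain ⟨xj, hxj⟩ := exists_real hj1.2
        by_cases hjJ₁ : j ∈ J₁
        · have h1 : ¬ (((cv i : Rmax)) + x i ≤ ((cv j : Rmax)) + x j) := by
            intro h
            exact hcon (h.trans (Finset.le_sup (f := fun j' => ((cv j' : Rmax)) + x j') hjJ₁))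
          rw [hxi', hxj] at h1
          have h2 : cv j + xj < cv i + xi := by
            rcases lt_or_ge (cv j + xj) (cv i + xi) with h | h
            · exact h
            · exact absurd (by exact_mod_cast h : ((cv i : Rmax)) + (xi : Rmax) ≤ ((cv j : Rmax)) + (xj : Rmax)) h1
          rw [hcvI i hi, hcvJ j hjJ₁] at h2
          have h3 : xj - xi < D i j := by
            have h4 := hAB i hi j hjJ₁
            linarith
          obtain ⟨H', hH', hgt⟩ := hDlt i j (xj - xi) h3
          refine ⟨H', hH', fun xj' hxj' _ => ?_⟩
          have : (xj : Rmax) = (xj' : Rmax) := by rw [← hxj, ← hxj']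
          have exj : xj = xj' := by exact_mod_cast this
          rw [← exj]; exact hgt
        · have hnbdd : ¬ Bdd i j := fun hb =>
            hjJ₁ (Finset.mem_filter.mpr ⟨hj1.1, hd i hi i₀ hi₀ j hj1.1 hb⟩)
          rw [hBdd, not_bddAbove_iff] at hnbdd
          obtain ⟨r, ⟨H', hH', rfl⟩, hr⟩ := hnbdd (xj - xi)
          refine ⟨H', hH', fun xj' hxj' _ => ?_⟩
          have : (xj : Rmax) = (xj' : Rmax) := by rw [← hxj, ← hxj']
          have exj : xj = xj' := by exact_mod_cast this
          rw [← exj]; exact hr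
      · exact ⟨H₀, hT0, fun xj hxj hj =>
          absurd ⟨hj, by rw [hxj]; exact WithBot.coe_ne_bot⟩ hj1⟩
    choose g hg1 hg2 using hpick
    obtain ⟨j1, hj1J, hminj⟩ := chain_finset_min hC J ⟨j₀, hj₀J⟩ g (fun j _ => hTC _ (hg1 j))
    have hxg : x ∈ halfSpace I J (aa (g j1)) := by
      rw [← hTsh _ (hg1 j1)]; exact hx _ (hg1 j1)
    obtain ⟨j, hj, vj, hvj, hineq⟩ := sat_halfSpace hxg hi hxi'
    have hlt := hg2 j vj hvj hj
    have hmo := hmono (g j) (hg1 j) (g j1) (hg1 j1) (hminj j hj) i hi j hj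
    have hle2 : dd (g j1) i j ≤ vj - xi := by simp only [hdd]; linarith
    linarith
  refine ⟨halfSpace I J₁ cv, isHalfSpace_halfSpace _ _ _, ?_, ?_⟩
  · intro v hv
    exact hdir2 v (fun H hH => hVC H (hTC H hH) hv)
  · intro H hH
    obtain ⟨H', hH', hsub⟩ := hcoin' H hH
    exact (hdir1 H' hH').trans hsub

lemma sup_add_distrib {β : Type} (s : Finset β) (f : β → Rmax) (x : Rmax) :
    s.sup f + x = s.sup (fun b => f b + x) :=
  Finset.comp_sup_eq_sup_comp (· + x)
    (fun _ _ => Monotone.map_max (fun _ _ h => add_le_add_left h x)) (WithBot.bot_add x)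

section ExtRep

variable {p : ℕ}

def ccc (w : Fin p → Fin n → Rmax) (i : Fin n) (σ : Fin p → Fin n) (r : Fin p) : Rmax :=
  w r i + ((-(w r (σ r)).unbotD 0 : ℝ) : Rmax)

def HS (w : Fin p → Fin n → Rmax) (i : Fin n) (σ : Fin p → Fin n) : Set (Fin n → Rmax) :=
  {x | x i ≤ Finset.univ.sup (fun r => ccc w i σ r + x (σ r))}

lemma sup_unit (i : Fin n) (x : Fin n → Rmax) :
    Finset.univ.sup (fun k => (if k = i then (0:Rmax) else ⊥) + x k) = x i := by
  apply le_antisymm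
  · refine Finset.sup_le fun k _ => ?_
    by_cases hk : k = i
    · subst hk; rw [if_pos rfl, zero_add]
    · rw [if_neg hk, WithBot.bot_add]; exact bot_le
  · have h1 : (if i = i then (0:Rmax) else ⊥) + x i = x i := by rw [if_pos rfl, zero_add]
    exact h1 ▸ Finset.le_sup (f := fun k => (if k = i then (0:Rmax) else ⊥) + x k)
      (Finset.mem_univ i)

lemma sup_regroup (w : Fin p → Fin n → Rmax) (i : Fin n) (σ : Fin p → Fin n)
    (x : Fin n → Rmax) :
    Finset.univ.sup
        (fun j => (Finset.univ.sup (fun r => if σ r = j then ccc w i σ r else ⊥)) + x j)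
      = Finset.univ.sup (fun r => ccc w i σ r + x (σ r)) := by
  classical
  apply le_antisymm
  · refine Finset.sup_le fun j _ => ?_
    rw [sup_add_distrib]
    refine Finset.sup_le fun r _ => ?_
    by_cases h : σ r = j
    · rw [if_pos h, ← h]
      exact Finset.le_sup (f := fun r => ccc w i σ r + x (σ r)) (Finset.mem_univ r)
    · rw [if_neg h, WithBot.bot_add]; exact bot_le
  · refine Finset.sup_le fun r _ => ?_
    have h1 : ccc w i σ r ≤ Finset.univ.sup (fun r' => if σ r' = σ r then ccc w i σ r' else ⊥) := by
      have h2 : (if σ r = σ r then ccc w i σ r else ⊥) = ccc w i σ r := if_pos rfl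
      exact h2 ▸ Finset.le_sup (f := fun r' => if σ r' = σ r then ccc w i σ r' else ⊥)
        (Finset.mem_univ r)
    exact le_trans (add_le_add_left h1 (x (σ r)))
      (Finset.le_sup (f := fun j =>
        (Finset.univ.sup (fun r' => if σ r' = j then ccc w i σ r' else ⊥)) + x j)
        (Finset.mem_univ (σ r)))

lemma isHalfSpace_HS (w : Fin p → Fin n → Rmax) (i : Fin n) (σ : Fin p → Fin n) :
    IsHalfSpace (HS w i σ) := by
  classical
  refine ⟨fun k => if k = i then (0:Rmax) else ⊥,
          fun j => Finset.univ.sup (fun r => if σ r = j then ccc w i σ r else ⊥), ?_⟩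
  ext x
  simp only [HS, Set.mem_setOf_eq]
  rw [sup_unit i x, sup_regroup w i σ x]

lemma sound_HS {X : Set (Fin n → Rmax)} (w : Fin p → Fin n → Rmax)
    (hw : ∀ u ∈ X, ∀ i : Fin n, u i ≠ ⊥ → ∃ ρ, w ρ = u)
    (i : Fin n) (σ : Fin p → Fin n) (hσ : ∀ r, w r (σ r) ≠ ⊥) :
    tropCone X ⊆ HS w i σ := by
  rintro x ⟨m', lam, u, hu, rfl⟩
  simp only [HS, Set.mem_setOf_eq]
  refine Finset.sup_le fun s _ => ?_
  by_cases hbot : u s i = ⊥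
  · rw [hbot, WithBot.add_bot]; exact bot_le
  by_cases hlam : lam s = ⊥
  · rw [hlam, WithBot.bot_add]; exact bot_le
  obtain ⟨ρ, hρ⟩ := hw (u s) (hu s) i hbot
  set W : ℝ := (w ρ (σ ρ)).unbotD 0 with hW
  have hWc : ((W : ℝ) : Rmax) = w ρ (σ ρ) := coe_unbot (hσ ρ)
  have h1 : lam s + ((W:ℝ):Rmax) ≤ Finset.univ.sup (fun s' => lam s' + u s' (σ ρ)) := by
    rw [hWc, hρ]
    exact Finset.le_sup (f := fun s' => lam s' + u s' (σ ρ)) (Finset.mem_univ s)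
  have e0 : ((-W : ℝ) : Rmax) + ((W:ℝ):Rmax) = (0:Rmax) := by
    rw [← WithBot.coe_add]; norm_num
  have h2 : lam s + u s i ≤ ccc w i σ ρ + (lam s + ((W:ℝ):Rmax)) := by
    have hW2 : (u s (σ ρ)).unbotD 0 = W := by rw [hW, hρ]
    have e1 : ccc w i σ ρ + (lam s + ((W:ℝ):Rmax))
        = (u s i + ((-W:ℝ):Rmax)) + (lam s + ((W:ℝ):Rmax)) := by
      simp only [ccc, hρ, hW2]
    rw [e1]
    have e2 : lam s + u s i = (u s i + ((-W:ℝ):Rmax)) + (lam s + ((W:ℝ):Rmax)) := by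
      rw [← add_zero (lam s + u s i), ← e0]; abel
    exact le_of_eq e2
  refine le_trans (h2.trans (add_le_add_right h1 _)) ?_
  exact Finset.le_sup
    (f := fun r => ccc w i σ r + Finset.univ.sup (fun s' => lam s' + u s' (σ r)))
    (Finset.mem_univ ρ)

lemma complete_HS {X : Set (Fin n → Rmax)} (w : Fin p → Fin n → Rmax)
    (hw2 : ∀ r, w r ∈ X) (hw3 : ∀ r, ∃ k, w r k ≠ ⊥) (x : Fin n → Rmax)
    (hx : ∀ (i : Fin n) (σ : Fin p → Fin n), (∀ r, w r (σ r) ≠ ⊥) → x ∈ HS w i σ) :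
    x ∈ tropCone X := by
  classical
  set Kr : Fin p → Finset (Fin n) := fun r => Finset.univ.filter (fun k => w r k ≠ ⊥) with hKr
  have hKne : ∀ r, (Kr r).Nonempty := by
    intro r; obtain ⟨k, hk⟩ := hw3 r; exact ⟨k, by simp [hKr, hk]⟩
  set lam : Fin p → Rmax :=
    fun r => (Kr r).inf' (hKne r) (fun k => x k + ((-(w r k).unbotD 0 : ℝ) : Rmax)) with hlam
  have hlow : ∀ r k, lam r + w r k ≤ x k := by
    intro r k
    by_cases hk : w r k = ⊥
    · rw [hk, WithBot.add_bot]; exact bot_le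
    · have hkK : k ∈ Kr r := by simp [hKr, hk]
      obtain ⟨u, hu⟩ := exists_real hk
      have h1 : lam r ≤ x k + ((-u : ℝ) : Rmax) := by
        have h2 := Finset.inf'_le (fun k' => x k' + ((-(w r k').unbotD 0 : ℝ) : Rmax)) hkK
        rw [hu, WithBot.unbotD_coe] at h2
        exact h2
      rw [hu]
      calc lam r + (u:Rmax) ≤ (x k + ((-u:ℝ):Rmax)) + (u:Rmax) := add_le_add_left h1 _
        _ = x k + (((-u)+u : ℝ) : Rmax) := by rw [add_assoc, WithBot.coe_add]
        _ = x k + ((0:ℝ):Rmax) := by norm_num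
        _ = x k := by rw [WithBot.coe_zero, add_zero]
  have hup : ∀ i, x i ≤ Finset.univ.sup (fun r => lam r + w r i) := by
    intro i
    have hatt : ∀ r, ∃ k, k ∈ Kr r ∧ lam r = x k + ((-(w r k).unbotD 0 : ℝ) : Rmax) := by
      intro r
      obtain ⟨k, hk, he⟩ := Finset.exists_mem_eq_inf' (hKne r)
        (fun k => x k + ((-(w r k).unbotD 0 : ℝ) : Rmax))
      exact ⟨k, hk, he⟩
    choose σ hσ1 hσ2 using hatt
    have hvalid : ∀ r, w r (σ r) ≠ ⊥ := fun r => by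
      have := (Finset.mem_filter.mp (hσ1 r)).2
      exact this
    have hx' : x i ≤ Finset.univ.sup (fun r => ccc w i σ r + x (σ r)) := hx i σ hvalid
    refine le_trans hx' (Finset.sup_le fun r _ => ?_)
    have he : ccc w i σ r + x (σ r) = lam r + w r i := by
      rw [hσ2 r]
      simp only [ccc]
      abel
    rw [he]
    exact Finset.le_sup (f := fun r => lam r + w r i) (Finset.mem_univ r)
  exact ⟨p, lam, w, hw2, funext fun i =>
    le_antisymm (hup i) (Finset.sup_le fun r _ => hlow r i)⟩

end ExtRep
end Stmt8

/-- a finitely generated max-plus cone with full support is the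
intersection of finitely many half-spaces, each minimal with respect to it. -/
theorem stmt_8 {n : ℕ} (V : Set (Fin n → Rmax))
    (hfg : ∃ X : Set (Fin n → Rmax), X.Finite ∧ V = tropCone X)
    (hsupp : HasFullSupport V) :
    ∃ (m : ℕ) (H : Fin m → Set (Fin n → Rmax)),
      (∀ k, IsMinimalHalfSpace V (H k)) ∧ V = ⋂ k, H k := by
  classical
  obtain ⟨X, hXfin, hXV⟩ := hfg
  subst hXV
  set bot0 : Fin n → Rmax := fun _ => (⊥ : Rmax) with hbot0
  have hfin' : (X \ {bot0} : Set _).Finite := hXfin.subset Set.diff_subset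
  set s : Finset (Fin n → Rmax) := hfin'.toFinset with hsdef
  set w : Fin s.card → Fin n → Rmax := fun r => ((s.equivFin.symm r : s) : Fin n → Rmax) with hw
  have hwmem : ∀ r, w r ∈ (X \ {bot0} : Set _) := fun r => by
    have h0 : ((s.equivFin.symm r : s) : Fin n → Rmax) ∈ hfin'.toFinset := (s.equivFin.symm r).2
    exact hfin'.mem_toFinset.mp h0
  have hwX : ∀ r, w r ∈ X := fun r => (hwmem r).1
  have hw3 : ∀ r, ∃ k, w r k ≠ ⊥ := by
    intro r
    by_contra hcon
    push_neg at hcon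
    exact (hwmem r).2 (by
      have : w r = bot0 := funext fun k => hcon k
      simp [this])
  have hwenum : ∀ u ∈ X, ∀ i : Fin n, u i ≠ ⊥ → ∃ ρ, w ρ = u := by
    intro u hu i hi
    have hne : u ≠ bot0 := fun h => hi (by rw [h])
    have hmem : u ∈ s := hfin'.mem_toFinset.mpr ⟨hu, by simp [hne]⟩
    exact ⟨s.equivFin ⟨u, hmem⟩, by simp [hw]⟩
  set Hs : (Fin n × (Fin s.card → Fin n)) → Set (Fin n → Rmax) :=
    fun t => if (∀ r, w r (t.2 r) ≠ ⊥) then Stmt8.HS w t.1 t.2 else Set.univ with hHs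
  have hhalf : ∀ t, IsHalfSpace (Hs t) := by
    intro t
    by_cases h : ∀ r, w r (t.2 r) ≠ ⊥
    · rw [hHs]; simp only; rw [if_pos h]; exact Stmt8.isHalfSpace_HS w t.1 t.2
    · rw [hHs]; simp only; rw [if_neg h]; exact Stmt8.isHalfSpace_univ
  have hsound : ∀ t, tropCone X ⊆ Hs t := by
    intro t
    by_cases h : ∀ r, w r (t.2 r) ≠ ⊥
    · rw [hHs]; simp only; rw [if_pos h]; exact Stmt8.sound_HS w hwenum t.1 t.2 h
    · rw [hHs]; simp only; rw [if_neg h]; exact Set.subset_univ _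
  have hcomp : (⋂ t, Hs t) ⊆ tropCone X := by
    intro x hxI
    refine Stmt8.complete_HS w hwX hw3 x ?_
    intro i σ hσ
    have h1 := Set.mem_iInter.mp hxI (i, σ)
    rw [hHs] at h1
    simp only at h1
    rw [if_pos hσ] at h1
    exact h1
  have hminex : ∀ t : Fin n × (Fin s.card → Fin n),
      ∃ M, IsMinimalHalfSpace (tropCone X) M ∧ M ⊆ Hs t := by
    intro t
    have hz := zorn_superset_nonempty
      {H : Set (Fin n → Rmax) | IsHalfSpace H ∧ tropCone X ⊆ H} ?_ (Hs t) ⟨hhalf t, hsound t⟩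
    · obtain ⟨M, hMsub, hMmin⟩ := hz
      refine ⟨M, ⟨hMmin.1.1, hMmin.1.2, ?_⟩, hMsub⟩
      rintro ⟨H', h1, h2, h3⟩
      exact h3.not_subset (hMmin.2 ⟨h1, h2⟩ h3.subset)
    · intro c hcS hchain hcne
      obtain ⟨K, h1, h2, h3⟩ := Stmt8.chain_lb hsupp hchain hcne
        (fun H hH => (hcS hH).1) (fun H hH => (hcS hH).2)
      exact ⟨K, ⟨h1, h2⟩, h3⟩
  choose M hM1 hM2 using hminex
  refine ⟨Fintype.card (Fin n × (Fin s.card → Fin n)),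
    fun k => M ((Fintype.equivFin (Fin n × (Fin s.card → Fin n))).symm k),
    fun k => hM1 _, ?_⟩
  apply Set.Subset.antisymm
  · intro x hx
    exact Set.mem_iInter.mpr fun k => (hM1 _).2.1 hx
  · intro x hx
    apply hcomp
    refine Set.mem_iInter.mpr fun t => ?_
    have h1 := Set.mem_iInter.mp hx ((Fintype.equivFin (Fin n × (Fin s.card → Fin n))) t)
    rw [Equiv.symm_apply_apply] at h1
    exact hM2 t h1
end
end

section
/- Let V ⊆ ℝ_max^n be the max-plus cone generated by vectors v^1,...,v^p ∈ ℝ^n (all entries finite), and let H = {x ∈ ℝ_max^n : max_{i∈I}(a_i + x_i) ≤ max_{j∈J}(a_j + x_j)}, where I, J are disjoint with I ∪ J = {1,...,n} and a ∈ ℝ^n. Then V ⊆ H if, and only if, ∪_{j∈J} S_j(−a) = {1,...,p}, where −a = (−a_1,...,−a_n). -/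
noncomputable section

private lemma add_sup_rmax {α : Type*} (c : Rmax) (s : Finset α) (f : α → Rmax) :
    c + s.sup f = s.sup (fun x => c + f x) := by
  induction s using Finset.cons_induction with
  | empty => simp
  | cons b s h ih => simp only [Finset.sup_cons, ← ih]; exact add_max ..

private lemma gen_mem {n p : ℕ} (v : Fin p → Fin n → ℝ) (r : Fin p) :
    (fun i => ((v r i : Rmax))) ∈ genCone v := by
  refine ⟨fun s => if s = r then (0:Rmax) else ⊥, funext fun i => ?_⟩
  refine le_antisymm (le_trans ?_ (Finset.le_sup (Finset.mem_univ r)))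
    (Finset.sup_le fun s _ => ?_)
  · simp
  · by_cases hs : s = r <;> simp [hs]

private lemma subset_iff {n p : ℕ} (v : Fin p → Fin n → ℝ) (I J : Finset (Fin n))
    (a : Fin n → ℝ) :
    genCone v ⊆ halfSpace I J a ↔
      ∀ r, I.sup (fun i => ((a i : Rmax)) + v r i) ≤
           J.sup (fun j => ((a j : Rmax)) + v r j) := by
  constructor
  · intro h r
    exact h (gen_mem v r)
  · rintro h x ⟨lam, rfl⟩
    have key : ∀ (K : Finset (Fin n)),
        K.sup (fun i => (a i : Rmax) + Finset.univ.sup (fun r => lam r + v r i)) =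
        Finset.univ.sup (fun r => lam r + K.sup (fun i => (a i : Rmax) + v r i)) := by
      intro K
      calc K.sup (fun i => (a i : Rmax) + Finset.univ.sup fun r => lam r + v r i)
          = K.sup (fun i => Finset.univ.sup fun r => (a i : Rmax) + (lam r + v r i)) := by
            simp only [add_sup_rmax]
        _ = Finset.univ.sup (fun r => K.sup fun i => (a i : Rmax) + (lam r + v r i)) :=
            Finset.sup_comm ..
        _ = Finset.univ.sup (fun r => lam r + K.sup fun i => (a i : Rmax) + v r i) := by
            refine Finset.sup_congr rfl fun r _ => ?_
            rw [add_sup_rmax]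
            exact Finset.sup_congr rfl fun i _ => add_left_comm _ _ _
    simp only [halfSpace, Set.mem_setOf_eq]
    rw [key I, key J]
    exact Finset.sup_mono_fun fun r _ => add_le_add_right (h r) _

private lemma per_r {n : ℕ} [NeZero n] (I J : Finset (Fin n)) (hU : I ∪ J = Finset.univ)
    (a f0 : Fin n → ℝ) :
    (I.sup (fun i => ((a i : Rmax)) + f0 i) ≤ J.sup (fun j => ((a j : Rmax)) + f0 j)) ↔
      ∃ j ∈ J, f0 j + a j = ⨆ k, (f0 k + a k) := by
  set f : Fin n → ℝ := fun k => f0 k + a k with hf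
  have hcoe : ∀ (K : Finset (Fin n)),
      K.sup (fun i => ((a i : Rmax)) + f0 i) = K.sup (fun i => ((f i : ℝ) : Rmax)) :=
    fun K => Finset.sup_congr rfl fun i _ => by push_cast [hf]; exact add_comm _ _
  have hsup : (⨆ k, (f0 k + a k)) = Finset.univ.sup' Finset.univ_nonempty f :=
    (Finset.sup'_univ_eq_ciSup f).symm
  set M : ℝ := Finset.univ.sup' Finset.univ_nonempty f with hM
  rw [hcoe, hcoe, hsup]
  constructor
  · intro h
    obtain ⟨k0, _, hk0⟩ := Finset.exists_mem_eq_sup' Finset.univ_nonempty f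
    by_cases hk0J : k0 ∈ J
    · exact ⟨k0, hk0J, hk0.symm⟩
    · have hk0I : k0 ∈ I := by
        have : k0 ∈ I ∪ J := hU ▸ Finset.mem_univ k0
        exact (Finset.mem_union.mp this).resolve_right hk0J
      have hMI : ((M : ℝ) : Rmax) ≤ I.sup (fun i => ((f i : ℝ) : Rmax)) := by
        refine le_trans ?_ (Finset.le_sup hk0I)
        exact_mod_cast le_of_eq hk0
      have hMJ : ((M : ℝ) : Rmax) ≤ J.sup (fun i => ((f i : ℝ) : Rmax)) := hMI.trans h
      obtain ⟨j, hj, hjM⟩ := (Finset.le_sup_iff (WithBot.bot_lt_coe M)).mp hMJ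
      refine ⟨j, hj, le_antisymm (Finset.le_sup' f (Finset.mem_univ j)) (by exact_mod_cast hjM)⟩
  · rintro ⟨j, hj, hjM⟩
    have h1 : I.sup (fun i => ((f i : ℝ) : Rmax)) ≤ ((M : ℝ) : Rmax) := by
      refine Finset.sup_le fun i _ => ?_
      exact_mod_cast Finset.le_sup' f (Finset.mem_univ i)
    have h2 : ((M : ℝ) : Rmax) ≤ J.sup (fun i => ((f i : ℝ) : Rmax)) := by
      refine le_trans ?_ (Finset.le_sup hj)
      exact_mod_cast le_of_eq hjM.symm
    exact h1.trans h2


/-- `V ⊆ H` iff the sets `S_j(-a)`, `j ∈ J`, cover `{1,…,p}`. -/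
theorem stmt_10 {n p : ℕ} (hn : 0 < n) (v : Fin p → Fin n → ℝ)
    (I J : Finset (Fin n)) (a : Fin n → ℝ) (hIJ : Disjoint I J)
    (hU : I ∪ J = Finset.univ) :
    genCone v ⊆ halfSpace I J a ↔
      (⋃ j ∈ J, typeSet v (-a) j) = Set.univ := by
  haveI : NeZero n := ⟨hn.ne'⟩
  rw [subset_iff, Set.eq_univ_iff_forall]
  refine forall_congr' fun r => ?_
  rw [per_r I J hU a (v r)]
  simp [typeSet, sub_neg_eq_add, Set.mem_iUnion]
end
end

section
/- Let V ⊆ ℝ_max^n be the max-plus cone generated by vectors v^1,...,v^p ∈ ℝ^n (all entries finite), and let H = {x ∈ ℝ_max^n : max_{i∈I}(a_i + x_i) ≤ max_{j∈J}(a_j + x_j)}, with I, J disjoint, I ∪ J = {1,...,n}, a ∈ ℝ^n, be a half-space minimal with respect to V. Then the apex −a = (−a_1,...,−a_n) of H belongs to V. -/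
noncomputable section

namespace Stmt12Aux

lemma add_max' (c x y : Rmax) : c + max x y = max (c + x) (c + y) := by
  rcases le_total x y with h | h
  · rw [max_eq_right h, max_eq_right (add_le_add_right h c)]
  · rw [max_eq_left h, max_eq_left (add_le_add_right h c)]

lemma add_finsetSup {α : Type} (s : Finset α) (c : Rmax) (f : α → Rmax) :
    c + s.sup f = s.sup fun x => c + f x := by
  classical
  induction s using Finset.induction_on with
  | empty => simpa using WithBot.add_bot c
  | insert _ _ h ih =>
      rw [Finset.sup_insert, Finset.sup_insert, add_max', ih]

lemma sup_restrict {n : ℕ} (s : Finset (Fin n)) (g : Fin n → Rmax) :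
    Finset.univ.sup (fun i => if i ∈ s then g i else ⊥) = s.sup g := by
  apply le_antisymm
  · refine Finset.sup_le fun i _ => ?_
    by_cases hi : i ∈ s
    · simpa [hi] using Finset.le_sup (f := g) hi
    · simp [hi]
  · refine Finset.sup_le fun i hi => ?_
    have h := Finset.le_sup (f := fun i => if i ∈ s then g i else ⊥) (Finset.mem_univ i)
    simpa [hi] using h

lemma isHalfSpace_halfSpace {n : ℕ} (I J : Finset (Fin n)) (b : Fin n → ℝ) :
    IsHalfSpace (halfSpace I J b) := by
  refine ⟨fun i => if i ∈ I then (b i : Rmax) else ⊥,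
          fun j => if j ∈ J then (b j : Rmax) else ⊥, ?_⟩
  ext x
  have h1 : Finset.univ.sup (fun i => (if i ∈ I then (b i : Rmax) else ⊥) + x i)
      = I.sup (fun i => (b i : Rmax) + x i) := by
    rw [← sup_restrict I (fun i => (b i : Rmax) + x i)]
    refine Finset.sup_congr rfl fun i _ => ?_
    by_cases hi : i ∈ I <;> simp [hi, WithBot.bot_add]
  have h2 : Finset.univ.sup (fun j => (if j ∈ J then (b j : Rmax) else ⊥) + x j)
      = J.sup (fun j => (b j : Rmax) + x j) := by
    rw [← sup_restrict J (fun j => (b j : Rmax) + x j)]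
    refine Finset.sup_congr rfl fun j _ => ?_
    by_cases hj : j ∈ J <;> simp [hj, WithBot.bot_add]
  simp only [halfSpace, Set.mem_setOf_eq, h1, h2]

lemma gen_mem {n p : ℕ} (v : Fin p → Fin n → ℝ) (r : Fin p) :
    (fun i => ((v r i : ℝ) : Rmax)) ∈ genCone v := by
  classical
  refine ⟨fun s => if s = r then (0 : Rmax) else ⊥, funext fun i => ?_⟩
  apply le_antisymm
  · have h := Finset.le_sup
      (f := fun s => (if s = r then (0 : Rmax) else ⊥) + (v s i : Rmax)) (Finset.mem_univ r)
    simpa using h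
  · refine Finset.sup_le fun s _ => ?_
    by_cases hs : s = r
    · subst hs; simp
    · simp [hs, WithBot.bot_add]

lemma genCone_subset_halfSpace {n p : ℕ} (v : Fin p → Fin n → ℝ)
    (I J : Finset (Fin n)) (b : Fin n → ℝ)
    (h : ∀ r, (fun i => ((v r i : ℝ) : Rmax)) ∈ halfSpace I J b) :
    genCone v ⊆ halfSpace I J b := by
  rintro x ⟨μ, rfl⟩
  simp only [halfSpace, Set.mem_setOf_eq] at h ⊢
  refine Finset.sup_le fun i hi => ?_
  rw [add_finsetSup]
  refine Finset.sup_le fun r _ => ?_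
  have hr : ((b i : Rmax) + (v r i : Rmax)) ≤ J.sup (fun j => (b j : Rmax) + (v r j : Rmax)) :=
    le_trans (Finset.le_sup (f := fun i => (b i : Rmax) + (v r i : Rmax)) hi) (h r)
  calc (b i : Rmax) + (μ r + (v r i : Rmax))
      = μ r + ((b i : Rmax) + (v r i : Rmax)) := add_left_comm _ _ _
    _ ≤ μ r + J.sup (fun j => (b j : Rmax) + (v r j : Rmax)) := add_le_add_right hr _
    _ = J.sup (fun j => μ r + ((b j : Rmax) + (v r j : Rmax))) := add_finsetSup _ _ _
    _ ≤ J.sup (fun j => (b j : Rmax) + Finset.univ.sup (fun s => μ s + (v s j : Rmax))) := by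
        refine Finset.sup_mono_fun fun j _ => ?_
        rw [add_left_comm]
        exact add_le_add_right (Finset.le_sup (f := fun s => μ s + (v s j : Rmax))
          (Finset.mem_univ r)) _

end Stmt12Aux

/-- the apex of a minimal half-space belongs to the cone. -/
theorem stmt_12 {n p : ℕ} (hp : 0 < p) (v : Fin p → Fin n → ℝ)
    (I J : Finset (Fin n)) (a : Fin n → ℝ) (hIJ : Disjoint I J)
    (hU : I ∪ J = Finset.univ)
    (hmin : IsMinimalHalfSpace (genCone v) (halfSpace I J a)) :
    (fun i => ((-(a i) : ℝ) : Rmax)) ∈ genCone v := by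
  classical
  obtain ⟨hHS, hVH, hnotmin⟩ := hmin
  rcases Nat.eq_zero_or_pos n with hn0 | hn
  · subst hn0
    exact ⟨fun _ => ⊥, funext fun i => i.elim0⟩
  set r0 : Fin p := ⟨0, hp⟩ with hr0
  by_cases hJ : J = ∅
  · exfalso
    have hvr := hVH (Stmt12Aux.gen_mem v r0)
    simp only [halfSpace, Set.mem_setOf_eq, hJ, Finset.sup_empty] at hvr
    have hIu : I = Finset.univ := by rw [← hU, hJ, Finset.union_empty]
    have hi0 : (⟨0, hn⟩ : Fin n) ∈ I := hIu ▸ Finset.mem_univ _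
    have h1 : (a ⟨0, hn⟩ : Rmax) + (v r0 ⟨0, hn⟩ : Rmax) ≤ ⊥ :=
      le_trans (Finset.le_sup (f := fun i => (a i : Rmax) + (v r0 i : Rmax)) hi0) hvr
    rw [← WithBot.coe_add] at h1
    exact absurd h1 (by simp)
  have hJne : J.Nonempty := Finset.nonempty_of_ne_empty hJ
  have hfp : (Finset.univ : Finset (Fin p)).Nonempty := ⟨r0, Finset.mem_univ _⟩
  rcases Nat.lt_or_ge n 2 with hn2 | hn2
  · -- n = 1 : every finite vector belongs to the cone
    have hn1 : n = 1 := by omega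
    subst hn1
    refine ⟨fun r => if r = r0 then ((-(a 0) - v r0 0 : ℝ) : Rmax) else ⊥, funext fun i => ?_⟩
    have hi : i = 0 := Subsingleton.elim i 0
    subst hi
    have hsup : ∀ c : Rmax, Finset.univ.sup (fun r : Fin p => if r = r0 then c else ⊥) = c := by
      intro c
      apply le_antisymm
      · refine Finset.sup_le fun r _ => ?_
        by_cases hr : r = r0
        · rw [if_pos hr]
        · rw [if_neg hr]; exact bot_le
      · have h : (if r0 = r0 then c else ⊥) ≤
            Finset.univ.sup (fun r : Fin p => if r = r0 then c else ⊥) :=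
          Finset.le_sup (f := fun r : Fin p => if r = r0 then c else ⊥) (Finset.mem_univ r0)
        rwa [if_pos rfl] at h
    have key : ∀ r : Fin p,
        (if r = r0 then ((-(a 0) - v r0 0 : ℝ) : Rmax) else ⊥) + (v r 0 : Rmax)
        = if r = r0 then ((-(a 0) : ℝ) : Rmax) else ⊥ := by
      intro r
      by_cases hr : r = r0
      · rw [if_pos hr, if_pos hr, hr, ← WithBot.coe_add]
        norm_num
      · rw [if_neg hr, if_neg hr, WithBot.bot_add]
    calc ((-(a 0) : ℝ) : Rmax)
        = Finset.univ.sup (fun r : Fin p => if r = r0 then ((-(a 0) : ℝ) : Rmax) else ⊥) :=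
          (hsup _).symm
      _ = Finset.univ.sup
            (fun r => (if r = r0 then ((-(a 0) - v r0 0 : ℝ) : Rmax) else ⊥) + (v r 0 : Rmax)) :=
          Finset.sup_congr rfl fun r _ => (key r).symm
  by_cases hI : I = ∅
  · -- I empty and n ≥ 2 : contradiction with minimality
    exfalso
    set i1 : Fin n := ⟨0, hn⟩ with hi1d
    have hne : (Finset.univ.erase i1).Nonempty :=
      ⟨⟨1, hn2⟩, by simp [Finset.mem_erase, hi1d, Fin.ext_iff]⟩
    set t : ℝ := Finset.univ.inf' hfp
      (fun r => (Finset.univ.erase i1).sup' hne (fun j => v r j) - v r i1) with ht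
    set b : Fin n → ℝ := fun k => if k = i1 then t else 0 with hb
    apply hnotmin
    refine ⟨halfSpace {i1} (Finset.univ.erase i1) b,
      Stmt12Aux.isHalfSpace_halfSpace _ _ _, ?_, ?_⟩
    · refine Stmt12Aux.genCone_subset_halfSpace v _ _ _ fun r => ?_
      simp only [halfSpace, Set.mem_setOf_eq, Finset.sup_singleton]
      obtain ⟨j, hj, hjeq⟩ := Finset.exists_mem_eq_sup' hne (fun j => v r j)
      have hjne : j ≠ i1 := (Finset.mem_erase.1 hj).1
      have hbj : b j = 0 := by simp [hb, hjne]
      have hbi : b i1 = t := by simp [hb]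
      have hreal : b i1 + v r i1 ≤ b j + v r j := by
        have h1 : t ≤ (Finset.univ.erase i1).sup' hne (fun j => v r j) - v r i1 := by
          rw [ht]; exact Finset.inf'_le _ (Finset.mem_univ r)
        rw [hbi, hbj, ← hjeq]
        linarith
      calc (b i1 : Rmax) + (v r i1 : Rmax) = ((b i1 + v r i1 : ℝ) : Rmax) :=
            (WithBot.coe_add _ _).symm
        _ ≤ ((b j + v r j : ℝ) : Rmax) := WithBot.coe_le_coe.2 hreal
        _ = (b j : Rmax) + (v r j : Rmax) := WithBot.coe_add _ _
        _ ≤ _ := Finset.le_sup (f := fun j => (b j : Rmax) + (v r j : Rmax)) hj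
    · rw [Set.ssubset_iff_subset_ne]
      constructor
      · intro x _
        simp only [halfSpace, Set.mem_setOf_eq, hI, Finset.sup_empty]
        exact bot_le
      · intro hKeq
        set e : Fin n → Rmax := fun k => if k = i1 then (0 : Rmax) else ⊥ with hedef
        have heH : e ∈ halfSpace I J a := by
          simp only [halfSpace, Set.mem_setOf_eq, hI, Finset.sup_empty]
          exact bot_le
        rw [← hKeq] at heH
        simp only [halfSpace, Set.mem_setOf_eq, Finset.sup_singleton] at heH
        have hRb : (Finset.univ.erase i1).sup (fun j => (b j : Rmax) + e j) = ⊥ := by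
          refine le_bot_iff.1 (Finset.sup_le fun j hj => ?_)
          have hej : e j = ⊥ := by
            simp [hedef, (Finset.mem_erase.1 hj).1]
          rw [hej, WithBot.add_bot]
        rw [hRb] at heH
        have hei : e i1 = (0 : Rmax) := by simp [hedef]
        rw [hei] at heH
        simp at heH
  -- main case: I and J both nonempty
  have hIne : I.Nonempty := Finset.nonempty_of_ne_empty hI
  have hgen : ∀ r : Fin p, I.sup (fun i => (a i : Rmax) + (v r i : Rmax))
      ≤ J.sup (fun j => (a j : Rmax) + (v r j : Rmax)) := by
    intro r
    have h := hVH (Stmt12Aux.gen_mem v r)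
    simpa only [halfSpace, Set.mem_setOf_eq] using h
  have hcoeJ : ∀ r : Fin p, J.sup (fun j => (a j : Rmax) + (v r j : Rmax))
      = ((J.sup' hJne (fun j => a j + v r j) : ℝ) : Rmax) := by
    intro r
    rw [Finset.coe_sup' hJne]
    exact Finset.sup_congr rfl fun j _ => by
      simp only [Function.comp_apply, WithBot.coe_add]
  have hbound : ∀ (r : Fin p) (k : Fin n),
      a k + v r k ≤ J.sup' hJne (fun j => a j + v r j) := by
    intro r k
    have hk : k ∈ I ∪ J := by rw [hU]; exact Finset.mem_univ k
    rcases Finset.mem_union.1 hk with hkI | hkJ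
    · have h : (a k : Rmax) + (v r k : Rmax)
          ≤ ((J.sup' hJne (fun j => a j + v r j) : ℝ) : Rmax) := by
        rw [← hcoeJ r]
        exact le_trans
          (Finset.le_sup (f := fun i => (a i : Rmax) + (v r i : Rmax)) hkI) (hgen r)
      rw [← WithBot.coe_add] at h
      exact_mod_cast h
    · exact Finset.le_sup' (fun j => a j + v r j) hkJ
  choose jr hjrJ hjre using fun r => Finset.exists_mem_eq_sup' hJne (fun j => a j + v r j)
  have hP : ∀ (r : Fin p) (k : Fin n), a k + v r k ≤ a (jr r) + v r (jr r) :=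
    fun r k => (hbound r k).trans_eq (hjre r)
  set lam : Fin p → ℝ := fun r => -(a (jr r) + v r (jr r)) with hlam
  set z : Fin n → ℝ := fun i => Finset.univ.sup' hfp (fun r => lam r + v r i) with hz
  have hz_le : ∀ k, z k ≤ -(a k) := by
    intro k
    simp only [hz]
    refine Finset.sup'_le _ _ fun r _ => ?_
    have h := hP r k
    simp only [hlam]
    linarith
  have hz_ge : ∀ (r : Fin p) (k : Fin n), lam r + v r k ≤ z k := by
    intro r k
    simp only [hz]
    exact Finset.le_sup' (fun r => lam r + v r k) (Finset.mem_univ r)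
  have hz_jr : ∀ r, z (jr r) = -(a (jr r)) := by
    intro r
    refine le_antisymm (hz_le _) ?_
    have h := hz_ge r (jr r)
    simp only [hlam] at h
    linarith
  set K : Finset (Fin n) := Finset.univ.filter (fun k => z k = -(a k)) with hK
  have hmemK : ∀ k, k ∈ K ↔ z k = -(a k) := by
    intro k; simp only [hK, Finset.mem_filter, Finset.mem_univ, true_and]
  have hjrK : ∀ r, jr r ∈ J ∩ K :=
    fun r => Finset.mem_inter.2 ⟨hjrJ r, (hmemK _).2 (hz_jr r)⟩
  set a' : Fin n → ℝ := fun k => -(z k) with ha'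
  have haK : ∀ k ∈ K, a' k = a k := by
    intro k hk
    have h := (hmemK k).1 hk
    simp only [ha']
    rw [h]; ring
  have ha_le : ∀ k, a k ≤ a' k := by
    intro k; have := hz_le k; simp only [ha']; linarith
  have hVH' : genCone v ⊆ halfSpace I (J ∩ K) a' := by
    refine Stmt12Aux.genCone_subset_halfSpace v _ _ _ fun r => ?_
    simp only [halfSpace, Set.mem_setOf_eq]
    refine Finset.sup_le fun i hiI => ?_
    have h1 : a' i + v r i ≤ a' (jr r) + v r (jr r) := by
      have h2 := hz_ge r i
      simp only [hlam] at h2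
      have h4 := hz_jr r
      simp only [ha']
      rw [h4]
      linarith
    calc (a' i : Rmax) + (v r i : Rmax) = ((a' i + v r i : ℝ) : Rmax) :=
          (WithBot.coe_add _ _).symm
      _ ≤ ((a' (jr r) + v r (jr r) : ℝ) : Rmax) := WithBot.coe_le_coe.2 h1
      _ = (a' (jr r) : Rmax) + (v r (jr r) : Rmax) := WithBot.coe_add _ _
      _ ≤ _ := Finset.le_sup (f := fun j => (a' j : Rmax) + (v r j : Rmax)) (hjrK r)
  have hH'H : halfSpace I (J ∩ K) a' ⊆ halfSpace I J a := by
    intro x hx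
    simp only [halfSpace, Set.mem_setOf_eq] at hx ⊢
    calc I.sup (fun i => (a i : Rmax) + x i)
        ≤ I.sup (fun i => (a' i : Rmax) + x i) :=
          Finset.sup_mono_fun fun i _ => add_le_add_left (WithBot.coe_le_coe.2 (ha_le i)) _
      _ ≤ (J ∩ K).sup (fun j => (a' j : Rmax) + x j) := hx
      _ = (J ∩ K).sup (fun j => (a j : Rmax) + x j) :=
          Finset.sup_congr rfl fun j hj => by rw [haK j (Finset.mem_inter.1 hj).2]
      _ ≤ J.sup (fun j => (a j : Rmax) + x j) := Finset.sup_mono Finset.inter_subset_left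
  have hEq : halfSpace I (J ∩ K) a' = halfSpace I J a := by
    by_contra hne
    exact hnotmin ⟨_, Stmt12Aux.isHalfSpace_halfSpace _ _ _, hVH',
      Set.ssubset_iff_subset_ne.2 ⟨hH'H, hne⟩⟩
  have hIK : ∀ i ∈ I, z i = -(a i) := by
    intro i hiI
    have hyH : (fun k => ((-(a k) : ℝ) : Rmax)) ∈ halfSpace I J a := by
      simp only [halfSpace, Set.mem_setOf_eq]
      have hL : I.sup (fun i => (a i : Rmax) + ((-(a i) : ℝ) : Rmax)) = ((0 : ℝ) : Rmax) := by
        rw [show I.sup (fun i => (a i : Rmax) + ((-(a i) : ℝ) : Rmax))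
            = I.sup (fun _ => ((0 : ℝ) : Rmax)) from
          Finset.sup_congr rfl fun i _ => by rw [← WithBot.coe_add]; norm_num]
        exact Finset.sup_const hIne _
      have hR : J.sup (fun j => (a j : Rmax) + ((-(a j) : ℝ) : Rmax)) = ((0 : ℝ) : Rmax) := by
        rw [show J.sup (fun j => (a j : Rmax) + ((-(a j) : ℝ) : Rmax))
            = J.sup (fun _ => ((0 : ℝ) : Rmax)) from
          Finset.sup_congr rfl fun j _ => by rw [← WithBot.coe_add]; norm_num]
        exact Finset.sup_const hJne _
      rw [hL, hR]
    rw [← hEq] at hyH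
    simp only [halfSpace, Set.mem_setOf_eq] at hyH
    have hR' : (J ∩ K).sup (fun j => (a' j : Rmax) + ((-(a j) : ℝ) : Rmax))
        = ((0 : ℝ) : Rmax) := by
      rw [show (J ∩ K).sup (fun j => (a' j : Rmax) + ((-(a j) : ℝ) : Rmax))
          = (J ∩ K).sup (fun _ => ((0 : ℝ) : Rmax)) from
        Finset.sup_congr rfl fun j hj => by
          rw [haK j (Finset.mem_inter.1 hj).2, ← WithBot.coe_add]; norm_num]
      exact Finset.sup_const ⟨jr r0, hjrK r0⟩ _
    rw [hR'] at hyH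
    have h5 : (a' i : Rmax) + ((-(a i) : ℝ) : Rmax) ≤ ((0 : ℝ) : Rmax) := le_trans
      (Finset.le_sup (f := fun i => (a' i : Rmax) + ((-(a i) : ℝ) : Rmax)) hiI) hyH
    rw [← WithBot.coe_add] at h5
    have h6 : a' i + -(a i) ≤ 0 := by exact_mod_cast h5
    have h7 := hz_le i
    simp only [ha'] at h6
    linarith
  have hJK : ∀ j ∈ J, z j = -(a j) := by
    intro j1 hj1
    by_contra hzj
    set x : Fin n → Rmax :=
      fun k => if k ∈ I ∪ (J \ K) then ((-(a k) : ℝ) : Rmax) else ⊥ with hxdef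
    obtain ⟨i0, hi0⟩ := id hIne
    have hj1K : j1 ∈ J \ K := Finset.mem_sdiff.2 ⟨hj1, fun hk => hzj ((hmemK j1).1 hk)⟩
    have hxH : x ∈ halfSpace I J a := by
      simp only [halfSpace, Set.mem_setOf_eq]
      have hL : I.sup (fun i => (a i : Rmax) + x i) = ((0 : ℝ) : Rmax) := by
        rw [show I.sup (fun i => (a i : Rmax) + x i) = I.sup (fun _ => ((0 : ℝ) : Rmax)) from
          Finset.sup_congr rfl fun i hi => by
            simp only [hxdef]
            rw [if_pos (Finset.mem_union.2 (Or.inl hi)), ← WithBot.coe_add]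
            norm_num]
        exact Finset.sup_const hIne _
      have hterm : (a j1 : Rmax) + x j1 = ((0 : ℝ) : Rmax) := by
        simp only [hxdef]
        rw [if_pos (Finset.mem_union.2 (Or.inr hj1K)), ← WithBot.coe_add]
        norm_num
      rw [hL]
      calc ((0 : ℝ) : Rmax) = (a j1 : Rmax) + x j1 := hterm.symm
        _ ≤ J.sup (fun j => (a j : Rmax) + x j) :=
            Finset.le_sup (f := fun j => (a j : Rmax) + x j) hj1
    rw [← hEq] at hxH
    simp only [halfSpace, Set.mem_setOf_eq] at hxH
    have hR0 : (J ∩ K).sup (fun j => (a' j : Rmax) + x j) = ⊥ := by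
      refine le_bot_iff.1 (Finset.sup_le fun j hj => ?_)
      obtain ⟨hjJ, hjK⟩ := Finset.mem_inter.1 hj
      have hnm : j ∉ I ∪ (J \ K) := by
        intro hmem
        rcases Finset.mem_union.1 hmem with h | h
        · exact (Finset.disjoint_right.1 hIJ hjJ) h
        · exact (Finset.mem_sdiff.1 h).2 hjK
      have hxj : x j = ⊥ := by simp only [hxdef]; rw [if_neg hnm]
      rw [hxj, WithBot.add_bot]
    rw [hR0] at hxH
    have h8 : (a' i0 : Rmax) + x i0 ≤ ⊥ :=
      le_trans (Finset.le_sup (f := fun i => (a' i : Rmax) + x i) hi0) hxH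
    have hxi0 : x i0 = ((-(a i0) : ℝ) : Rmax) := by
      simp only [hxdef]; rw [if_pos (Finset.mem_union.2 (Or.inl hi0))]
    rw [hxi0, ← WithBot.coe_add] at h8
    simp at h8
  refine ⟨fun r => ((lam r : ℝ) : Rmax), funext fun i => ?_⟩
  have hzi : z i = -(a i) := by
    have hk : i ∈ I ∪ J := by rw [hU]; exact Finset.mem_univ i
    rcases Finset.mem_union.1 hk with h | h
    · exact hIK i h
    · exact hJK i h
  calc ((-(a i) : ℝ) : Rmax) = ((z i : ℝ) : Rmax) := by rw [hzi]
    _ = ((Finset.univ.sup' hfp (fun r => lam r + v r i) : ℝ) : Rmax) := by simp only [hz]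
    _ = Finset.univ.sup (fun r => ((lam r + v r i : ℝ) : Rmax)) := by
        rw [Finset.coe_sup' hfp]; rfl
    _ = Finset.univ.sup (fun r => (lam r : Rmax) + (v r i : Rmax)) :=
        Finset.sup_congr rfl fun r _ => WithBot.coe_add _ _
end
end
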